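/- The auxiliary iteration iso is correct: for f ∈ RPP^k with translated iso ω_f, the structurally recursive iso ω_aux : Z^k ⊗ npos ↔ Z^k ⊗ npos satisfies ω_aux(x̄₁,…,x̄_k, n̲) →* (z̄₁,…,z̄_k, n̲) where (z₁,…,z_k) = f^n(x₁,…,x_k), for every strictly positive natural n. -/

import Mathlib

namespace RPPx

/-- Recursive Primitive Permutations, inductively generated by arity. -/
inductive RPP : ℕ → Type
  | id : RPP 1
  | suc : RPP 1
  | pre : RPP 1
  | sign : RPP 1
  | swap : RPP 2
  | comp {k : ℕ} (f g : RPP k) : RPP k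
  | par {k l : ℕ} (f : RPP k) (g : RPP l) : RPP (k + l)
  | it {k : ℕ} (f : RPP k) : RPP (k + 1)
  | ite {k : ℕ} (f g h : RPP k) : RPP (k + 1)

/-- The semantics of an RPP function, as a map `ℤ^k → ℤ^k`. -/
def eval : ∀ {k : ℕ}, RPP k → (Fin k → ℤ) → (Fin k → ℤ)
  | _, .id => fun v => v
  | _, .suc => fun v i => v i + 1
  | _, .pre => fun v i => v i - 1
  | _, .sign => fun v i => -(v i)
  | _, .swap => fun v i => v i.rev
  | _, .comp f g => fun v => eval g (eval f v)
  | _, @RPP.par k l f g =>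
      fun v => Fin.append (eval f (v ∘ Fin.castAdd l)) (eval g (v ∘ Fin.natAdd k))
  | _, @RPP.it k f =>
      fun v => Fin.snoc ((eval f)^[(v (Fin.last k)).natAbs] (Fin.init v)) (v (Fin.last k))
  | _, @RPP.ite k f g h =>
      fun v => Fin.snoc
        ((if 0 < v (Fin.last k) then eval f
          else if v (Fin.last k) = 0 then eval g else eval h) (Fin.init v))
        (v (Fin.last k))

/-- The structurally defined inverse of an RPP function. -/
def inv : ∀ {k : ℕ}, RPP k → RPP k
  | _, .id => .id
  | _, .suc => .pre
  | _, .pre => .suc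
  | _, .sign => .sign
  | _, .swap => .swap
  | _, .comp f g => .comp (inv g) (inv f)
  | _, .par f g => .par (inv f) (inv g)
  | _, .it f => .it (inv f)
  | _, .ite f g h => .ite (inv f) (inv g) (inv h)

end RPPx

namespace LinRev

/-! ## Types of the linear reversible language:  A ::= 1 | A⊕B | A⊗B | μX.A | X  -/

inductive Ty : Type
  | one : Ty
  | sum : Ty → Ty → Ty
  | prod : Ty → Ty → Ty
  | mu : Ty → Ty
  | tvar : ℕ → Ty
  deriving DecidableEq

/-- Substitute type `T` for the (de Bruijn) type variable `n` in a type. -/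
def Ty.substF : Ty → ℕ → Ty → Ty
  | .one, _, _ => .one
  | .sum A B, n, T => .sum (A.substF n T) (B.substF n T)
  | .prod A B, n, T => .prod (A.substF n T) (B.substF n T)
  | .mu A, n, T => .mu (A.substF (n + 1) T)
  | .tvar m, n, T => if m = n then T else .tvar m

/-- `A[X ← μX.A]`, the one-step unfolding of `μX.A` with body `A`. -/
def Ty.unfold (A : Ty) : Ty := A.substF 0 (.mu A)

/-! ## Values:  v ::= () | x | inl v | inr v | ⟨v,v⟩ | fold v  -/

inductive Val : Type
  | unit : Val
  | var : ℕ → Val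
  | inl : Val → Val
  | inr : Val → Val
  | pair : Val → Val → Val
  | fold : Val → Val
  deriving DecidableEq

/-- Free variables of a value. -/
def Val.fv : Val → Finset ℕ
  | .unit => ∅
  | .var x => {x}
  | .inl v => v.fv
  | .inr v => v.fv
  | .pair v w => v.fv ∪ w.fv
  | .fold v => v.fv

/-! ## Substitutions -/

/-- A substitution: a partial map from variables to values. -/
abbrev Sub := ℕ → Option Val

/-- The support of a substitution. -/
def Sub.supp (σ : Sub) : Set ℕ := {x | σ x ≠ none}

/-- Disjointness of supports. -/
def Sub.disj (σ₁ σ₂ : Sub) : Prop := ∀ x, σ₁ x = none ∨ σ₂ x = none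

/-- Union of two substitutions. -/
def Sub.union (σ₁ σ₂ : Sub) : Sub := fun x => (σ₁ x).orElse (fun _ => σ₂ x)

/-- Applying a substitution to a value. -/
def Val.applySub (σ : Sub) : Val → Val
  | .unit => .unit
  | .var x => (σ x).getD (.var x)
  | .inl v => .inl (v.applySub σ)
  | .inr v => .inr (v.applySub σ)
  | .pair v w => .pair (v.applySub σ) (w.applySub σ)
  | .fold v => .fold (v.applySub σ)

/-- The pattern-matching judgment `σ[p] = v`. -/
inductive Matches : Sub → Val → Val → Prop
  | unit : Matches (fun _ => none) .unit .unit
  | var (x : ℕ) (v : Val) :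
      Matches (fun y => if y = x then some v else none) (.var x) v
  | inl {σ p v} : Matches σ p v → Matches σ (.inl p) (.inl v)
  | inr {σ p v} : Matches σ p v → Matches σ (.inr p) (.inr v)
  | fold {σ p v} : Matches σ p v → Matches σ (.fold p) (.fold v)
  | pair {σ₁ σ₂ p₁ p₂ v₁ v₂} :
      Matches σ₁ p₁ v₁ → Matches σ₂ p₂ v₂ → Sub.disj σ₁ σ₂ →
      Matches (σ₁.union σ₂) (.pair p₁ p₂) (.pair v₁ v₂)

/-! ## The exhaustivity/non-overlapping predicate `OD_A(S)` -/

def proj1 (S : Set Val) : Set Val := {v | ∃ w, Val.pair v w ∈ S}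
def proj2 (S : Set Val) : Set Val := {w | ∃ v, Val.pair v w ∈ S}
def sect1 (S : Set Val) (v : Val) : Set Val := {w | Val.pair v w ∈ S}
def sect2 (S : Set Val) (w : Val) : Set Val := {v | Val.pair v w ∈ S}

inductive OD : Ty → Set Val → Prop
  | var (A : Ty) (x : ℕ) : OD A {Val.var x}
  | unit : OD .one {Val.unit}
  | sum {A B : Ty} {S T : Set Val} :
      OD A S → OD B T → OD (.sum A B) (Val.inl '' S ∪ Val.inr '' T)
  | mu {A : Ty} {S : Set Val} :
      OD A.unfold S → OD (.mu A) (Val.fold '' S)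
  | prodL {A B : Ty} {S : Set Val} :
      (∀ u ∈ S, ∃ v w, u = Val.pair v w) →
      OD A (proj1 S) → (∀ v ∈ proj1 S, OD B (sect1 S v)) →
      OD (.prod A B) S
  | prodR {A B : Ty} {S : Set Val} :
      (∀ u ∈ S, ∃ v w, u = Val.pair v w) →
      OD B (proj2 S) → (∀ w ∈ proj2 S, OD A (sect2 S w)) →
      OD (.prod A B) S

/-! ## Linear typing contexts (variables, at most one occurrence each) -/

abbrev Ctx := ℕ → Option Ty

def Ctx.empty : Ctx := fun _ => none
def Ctx.single (x : ℕ) (A : Ty) : Ctx := fun y => if y = x then some A else none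
def Ctx.disj (Γ Δ : Ctx) : Prop := ∀ x, Γ x = none ∨ Δ x = none
def Ctx.union (Γ Δ : Ctx) : Ctx := fun x => (Γ x).orElse (fun _ => Δ x)
def Ctx.unions (L : List Ctx) : Ctx := L.foldr Ctx.union Ctx.empty

/-- Linear typing of values: `Δ ⊢ v : A`. -/
inductive VTy : Ctx → Val → Ty → Prop
  | unit : VTy Ctx.empty .unit .one
  | var (x : ℕ) (A : Ty) : VTy (Ctx.single x A) (.var x) A
  | inl {Γ v A B} : VTy Γ v A → VTy Γ (.inl v) (.sum A B)
  | inr {Γ v A B} : VTy Γ v B → VTy Γ (.inr v) (.sum A B)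
  | fold {Γ v A} : VTy Γ v A.unfold → VTy Γ (.fold v) (.mu A)
  | pair {Γ Δ v w A B} :
      VTy Γ v A → VTy Δ w B → Ctx.disj Γ Δ →
      VTy (Γ.union Δ) (.pair v w) (.prod A B)

end LinRev
namespace LinRev

/-! ## Patterns, terms, isos -/

inductive Pat : Type
  | pvar : ℕ → Pat
  | ppair : Pat → Pat → Pat
  deriving DecidableEq

def Pat.toVal : Pat → Val
  | .pvar x => .var x
  | .ppair p q => .pair p.toVal q.toVal

def Pat.vars : Pat → Finset ℕ
  | .pvar x => {x}
  | .ppair p q => p.vars ∪ q.vars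

mutual
  inductive Term : Type
    | unit : Term
    | var : ℕ → Term
    | inl : Term → Term
    | inr : Term → Term
    | pair : Term → Term → Term
    | fold : Term → Term
    | app : Iso → Term → Term
    | lett : Pat → Term → Term → Term

  inductive Iso : Type
    | clauses : Clauses → Iso
    | fixI : ℕ → Iso → Iso
    | ivar : ℕ → Iso

  inductive Clauses : Type
    | nil : Clauses
    | cons : Val → Term → Clauses → Clauses
end

def Clauses.toList : Clauses → List (Val × Term)
  | .nil => []
  | .cons v e r => (v, e) :: r.toList

def Val.toTerm : Val → Term
  | .unit => .unit
  | .var x => .var x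
  | .inl v => .inl v.toTerm
  | .inr v => .inr v.toTerm
  | .pair v w => .pair v.toTerm w.toTerm
  | .fold v => .fold v.toTerm

def Pat.toTerm (p : Pat) : Term := p.toVal.toTerm

def Term.asVal : Term → Option Val
  | .unit => some .unit
  | .var x => some (.var x)
  | .inl t => t.asVal.map .inl
  | .inr t => t.asVal.map .inr
  | .pair a b =>
      match a.asVal, b.asVal with
      | some v, some w => some (.pair v w)
      | _, _ => none
  | .fold t => t.asVal.map .fold
  | _ => none

def Term.asPat : Term → Option Pat
  | .var x => some (.pvar x)
  | .pair a b =>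
      match a.asPat, b.asPat with
      | some p, some q => some (.ppair p q)
      | _, _ => none
  | _ => none

/-- `Val(e)`: the value at the end of a chain of lets. -/
def Term.valOf : Term → Option Val
  | .lett _ _ t₂ => t₂.valOf
  | t => t.asVal

/-- Free (term) variables of a term. -/
def Term.fvT : Term → Finset ℕ
  | .unit => ∅
  | .var x => {x}
  | .inl t => t.fvT
  | .inr t => t.fvT
  | .fold t => t.fvT
  | .pair a b => a.fvT ∪ b.fvT
  | .app _ t => t.fvT
  | .lett p a b => a.fvT ∪ (b.fvT \ p.vars)

/-- Applying a (value) substitution to a term. -/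
def Term.applySub (σ : Sub) : Term → Term
  | .unit => .unit
  | .var x => ((σ x).map Val.toTerm).getD (.var x)
  | .inl t => .inl (t.applySub σ)
  | .inr t => .inr (t.applySub σ)
  | .pair a b => .pair (a.applySub σ) (b.applySub σ)
  | .fold t => .fold (t.applySub σ)
  | .app ω t => .app ω (t.applySub σ)
  | .lett p a b => .lett p (a.applySub σ) (b.applySub σ)

/-! ## Substitution of iso-variables -/

mutual
  def Term.isoSub (f : ℕ) (w : Iso) : Term → Term
    | .unit => .unit
    | .var x => .var x
    | .inl t => .inl (Term.isoSub f w t)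
    | .inr t => .inr (Term.isoSub f w t)
    | .pair a b => .pair (Term.isoSub f w a) (Term.isoSub f w b)
    | .fold t => .fold (Term.isoSub f w t)
    | .app ω t => .app (Iso.isoSub f w ω) (Term.isoSub f w t)
    | .lett p a b => .lett p (Term.isoSub f w a) (Term.isoSub f w b)
  termination_by t => sizeOf t

  def Iso.isoSub (f : ℕ) (w : Iso) : Iso → Iso
    | .ivar g => if g = f then w else .ivar g
    | .fixI g ω => if g = f then .fixI g ω else .fixI g (Iso.isoSub f w ω)
    | .clauses l => .clauses (Clauses.isoSub f w l)
  termination_by ω => sizeOf ω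

  def Clauses.isoSub (f : ℕ) (w : Iso) : Clauses → Clauses
    | .nil => .nil
    | .cons v e r => .cons v (Term.isoSub f w e) (Clauses.isoSub f w r)
  termination_by l => sizeOf l
end

/-! ## Inversion of isos -/

mutual
  /-- The dual iso `ω⊥`. -/
  def Iso.inv : Iso → Iso
    | .ivar f => .ivar f
    | .fixI f ω => .fixI f ω.inv
    | .clauses l => .clauses l.inv
  termination_by ω => sizeOf ω

  def Clauses.inv : Clauses → Clauses
    | .nil => .nil
    | .cons v e r =>
        match invAux (Val.toTerm v) e with
        | some (v', e') => .cons v' e' r.inv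
        | none => .cons v e r.inv
  termination_by l => sizeOf l

  /-- Invert a clause body `let p₁ = ω₁ p₁' in … let pₙ = ωₙ pₙ' in v'`,
  reversing the lets and inverting each sub-iso; `acc` accumulates the result. -/
  def invAux : Term → Term → Option (Val × Term)
    | acc, .lett p (.app ω t) e =>
        match t.asPat with
        | some p' => invAux (.lett p' (.app ω.inv p.toTerm) acc) e
        | none => none
    | acc, t => t.asVal.map (fun v' => (v', acc))
  termination_by _ e => sizeOf e
end

end LinRev
namespace LinRev

/-! ## Operational semantics (deterministic call-by-value) -/

inductive Step : Term → Term → Prop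
  | inlC {t t'} : Step t t' → Step (.inl t) (.inl t')
  | inrC {t t'} : Step t t' → Step (.inr t) (.inr t')
  | foldC {t t'} : Step t t' → Step (.fold t) (.fold t')
  | pairL {t t'} (v : Val) : Step t t' → Step (.pair t v.toTerm) (.pair t' v.toTerm)
  | pairR {t t'} (v : Val) : Step t t' → Step (.pair v.toTerm t) (.pair v.toTerm t')
  | appC {ω t t'} : Step t t' → Step (.app ω t) (.app ω t')
  | lettC {p t₁ t₁' t₂} : Step t₁ t₁' → Step (.lett p t₁ t₂) (.lett p t₁' t₂)
  | isoRec {f ω t} :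
      Step (.app (.fixI f ω) t) (.app (Iso.isoSub f (.fixI f ω) ω) t)
  | lettE {σ : Sub} {p : Pat} {v : Val} {t : Term} :
      Matches σ p.toVal v → Step (.lett p v.toTerm t) (t.applySub σ)
  | isoApp {σ : Sub} {l : Clauses} {vi : Val} {e : Term} {v : Val} :
      (vi, e) ∈ l.toList → Matches σ vi v →
      Step (.app (.clauses l) v.toTerm) (e.applySub σ)

/-- Reflexive-transitive closure `→*`. -/
def Steps : Term → Term → Prop := Relation.ReflTransGen Step

/-! ## Structural recursion criterion -/

/-- Flatten a right-nested tensor type into its components. -/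
def Ty.tuple : Ty → List Ty
  | .prod A B => A :: B.tuple
  | A => [A]

/-- Flatten a right-nested pair value into its components. -/
def Val.tuple : Val → List Val
  | .pair a b => a :: b.tuple
  | v => [v]

/-- If a term is a tuple of variables `(x₁, …, xₘ)`, return the variables. -/
def Term.tupleVars : Term → Option (List ℕ)
  | .var x => some [x]
  | .pair (.var x) t => t.tupleVars.map (x :: ·)
  | _ => none

/-- Subterm relation on values. -/
inductive Val.SubV : Val → Val → Prop
  | refl (v : Val) : Val.SubV v v
  | inl {u v} : Val.SubV u v → Val.SubV u (.inl v)
  | inr {u v} : Val.SubV u v → Val.SubV u (.inr v)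
  | fold {u v} : Val.SubV u v → Val.SubV u (.fold v)
  | pairL {u v w} : Val.SubV u v → Val.SubV u (.pair v w)
  | pairR {u v w} : Val.SubV u w → Val.SubV u (.pair v w)

/- `RecCallT f p t` : the recursive call `f p` occurs as a subterm of `t`. -/
mutual
  inductive RecCallT : ℕ → Term → Term → Prop
    | here (f : ℕ) (p : Term) : RecCallT f p (.app (.ivar f) p)
    | inl {f p t} : RecCallT f p t → RecCallT f p (.inl t)
    | inr {f p t} : RecCallT f p t → RecCallT f p (.inr t)
    | fold {f p t} : RecCallT f p t → RecCallT f p (.fold t)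
    | pairL {f p t₁ t₂} : RecCallT f p t₁ → RecCallT f p (.pair t₁ t₂)
    | pairR {f p t₁ t₂} : RecCallT f p t₂ → RecCallT f p (.pair t₁ t₂)
    | appIso {f p ω t} : RecCallI f p ω → RecCallT f p (.app ω t)
    | appArg {f p ω t} : RecCallT f p t → RecCallT f p (.app ω t)
    | lett₁ {f p q t₁ t₂} : RecCallT f p t₁ → RecCallT f p (.lett q t₁ t₂)
    | lett₂ {f p q t₁ t₂} : RecCallT f p t₂ → RecCallT f p (.lett q t₁ t₂)

  inductive RecCallI : ℕ → Term → Iso → Prop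
    | clauses {f p l} : RecCallC f p l → RecCallI f p (.clauses l)
    | fixI {f g p ω} : RecCallI f p ω → g ≠ f → RecCallI f p (.fixI g ω)

  inductive RecCallC : ℕ → Term → Clauses → Prop
    | head {f p v e r} : RecCallT f p e → RecCallC f p (.cons v e r)
    | tail {f p v e r} : RecCallC f p r → RecCallC f p (.cons v e r)
end

/-- The structural recursion criterion for `fix f. {vᵢ ↔ eᵢ} : A ↔ C`:
some component `Aⱼ = μX.B` of the input type is such that in every clause,
if the `j`-th component of the pattern is closed there is no recursive call,
and otherwise every recursive call `f p` has `p` a tuple of variables whose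
`j`-th component is a strict subterm of the `j`-th pattern component. -/
def StructRecClauses (f : ℕ) (l : Clauses) (A : Ty) : Prop :=
  ∃ (j : ℕ) (B : Ty), A.tuple[j]? = some (Ty.mu B) ∧
    ∀ c ∈ l.toList, ∃ vj, (Val.tuple c.1)[j]? = some vj ∧
      ((vj.fv = ∅ ∧ ∀ p, ¬ RecCallT f p c.2) ∨
       (∀ p, RecCallT f p c.2 → ∃ xs : List ℕ,
          p.tupleVars = some xs ∧ xs.length = A.tuple.length ∧
          ∃ x, xs[j]? = some x ∧ Val.SubV (.var x) vj ∧ Val.var x ≠ vj))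

/-! ## Typing of terms and isos -/

/-- An iso-variable context: at most one iso-variable `f : A ↔ B`. -/
abbrev IsoCtx := Option (ℕ × Ty × Ty)

/-- Typing of let-patterns, producing the context of bound variables. -/
inductive PatTy : Pat → Ty → Ctx → Prop
  | pvar (x : ℕ) (A : Ty) : PatTy (.pvar x) A (Ctx.single x A)
  | ppair {p q A B Γ Δ} :
      PatTy p A Γ → PatTy q B Δ → Ctx.disj Γ Δ →
      PatTy (.ppair p q) (.prod A B) (Γ.union Δ)

mutual
  /-- Typing of terms: `Δ; Ψ ⊢ t : A`. -/
  inductive TermTy : Ctx → IsoCtx → Term → Ty → Prop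
    | unit (Ψ : IsoCtx) : TermTy Ctx.empty Ψ .unit .one
    | var (x : ℕ) (A : Ty) (Ψ : IsoCtx) : TermTy (Ctx.single x A) Ψ (.var x) A
    | inl {Γ Ψ t A B} : TermTy Γ Ψ t A → TermTy Γ Ψ (.inl t) (.sum A B)
    | inr {Γ Ψ t A B} : TermTy Γ Ψ t B → TermTy Γ Ψ (.inr t) (.sum A B)
    | fold {Γ Ψ t A} : TermTy Γ Ψ t A.unfold → TermTy Γ Ψ (.fold t) (.mu A)
    | pair {Γ Δ Ψ t₁ t₂ A B} :
        TermTy Γ Ψ t₁ A → TermTy Δ Ψ t₂ B → Ctx.disj Γ Δ →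
        TermTy (Γ.union Δ) Ψ (.pair t₁ t₂) (.prod A B)
    | appV {Γ Ψ ω t A B} :
        IsoTy Ψ ω A B → TermTy Γ Ψ t A → TermTy Γ Ψ (.app ω t) B
    | appC {Γ Ψ ω t A B} :
        IsoTy none ω A B → TermTy Γ Ψ t A → TermTy Γ Ψ (.app ω t) B
    | lett {Γ Δ Ξ Ψ p t₁ t₂ A B} :
        TermTy Γ Ψ t₁ A → PatTy p A Ξ → TermTy (Δ.union Ξ) Ψ t₂ B →
        Ctx.disj Γ Δ → Ctx.disj Δ Ξ →
        TermTy (Γ.union Δ) Ψ (.lett p t₁ t₂) B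

  /-- Typing of isos: `Ψ ⊢ ω : A ↔ B`. -/
  inductive IsoTy : IsoCtx → Iso → Ty → Ty → Prop
    | ivar (f : ℕ) (A B : Ty) : IsoTy (some (f, A, B)) (.ivar f) A B
    | fixI {f ω A B} (Ψ : IsoCtx) :
        IsoTy (some (f, A, B)) ω A B →
        (∀ l, ω = .clauses l → StructRecClauses f l A) →
        IsoTy Ψ (.fixI f ω) A B
    | clauses {Ψ l A B} (Γof : Val × Term → Ctx) :
        (∀ c ∈ Clauses.toList l, VTy (Γof c) c.1 A) →
        (∀ c ∈ Clauses.toList l, TermTy (Γof c) Ψ c.2 B) →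
        OD A {v | ∃ e, (v, e) ∈ Clauses.toList l} →
        OD B {w | ∃ c ∈ Clauses.toList l, Term.valOf c.2 = some w} →
        IsoTy Ψ (.clauses l) A B
end

/-! ## Explicit substitutions -/

/-- The substitution determined by an association list. -/
def Sub.ofList (L : List (ℕ × Val)) : Sub :=
  fun x => (L.find? (fun p => p.1 = x)).map Prod.snd

/-- `let σ in t` : a nested sequence of lets, one per binding. -/
def letSig (L : List (ℕ × Val)) (t : Term) : Term :=
  L.foldr (fun xv acc => .lett (.pvar xv.1) xv.2.toTerm acc) t

/-- The explicit let-propagation rules `→ₑₗₑₜ`. -/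
inductive ELet : Term → Term → Prop
  | letvar {x : ℕ} {v : Val} : ELet (.lett (.pvar x) v.toTerm (.var x)) v.toTerm
  | letpair {x : ℕ} {p : Pat} {t₁ t₂ t : Term} :
      ELet (.lett (.ppair (.pvar x) p) (.pair t₁ t₂) t)
           (.lett (.pvar x) t₁ (.lett p t₂ t))
  | pairL {x : ℕ} {v : Val} {t₁ t₂ : Term} : x ∈ t₁.fvT →
      ELet (.lett (.pvar x) v.toTerm (.pair t₁ t₂))
           (.pair (.lett (.pvar x) v.toTerm t₁) t₂)
  | pairR {x : ℕ} {v : Val} {t₁ t₂ : Term} : x ∈ t₂.fvT →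
      ELet (.lett (.pvar x) v.toTerm (.pair t₁ t₂))
           (.pair t₁ (.lett (.pvar x) v.toTerm t₂))
  | inl {x : ℕ} {v : Val} {t : Term} :
      ELet (.lett (.pvar x) v.toTerm (.inl t)) (.inl (.lett (.pvar x) v.toTerm t))
  | inr {x : ℕ} {v : Val} {t : Term} :
      ELet (.lett (.pvar x) v.toTerm (.inr t)) (.inr (.lett (.pvar x) v.toTerm t))
  | fold {x : ℕ} {v : Val} {t : Term} :
      ELet (.lett (.pvar x) v.toTerm (.fold t)) (.fold (.lett (.pvar x) v.toTerm t))
  | app {x : ℕ} {v : Val} {ω : Iso} {t : Term} :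
      ELet (.lett (.pvar x) v.toTerm (.app ω t)) (.app ω (.lett (.pvar x) v.toTerm t))

/-- The explicit-substitution reduction `→_{eβ}`. -/
inductive EBeta : Term → Term → Prop
  | elet {t t'} : ELet t t' → EBeta t t'
  | inlC {t t'} : EBeta t t' → EBeta (.inl t) (.inl t')
  | inrC {t t'} : EBeta t t' → EBeta (.inr t) (.inr t')
  | foldC {t t'} : EBeta t t' → EBeta (.fold t) (.fold t')
  | pairL {t t'} (v : Val) : EBeta t t' → EBeta (.pair t v.toTerm) (.pair t' v.toTerm)
  | pairR {t t'} (v : Val) : EBeta t t' → EBeta (.pair v.toTerm t) (.pair v.toTerm t')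
  | appC {ω t t'} : EBeta t t' → EBeta (.app ω t) (.app ω t')
  | lettC {p t₁ t₁' t₂} : EBeta t₁ t₁' → EBeta (.lett p t₁ t₂) (.lett p t₁' t₂)
  | isoRec {f ω t} :
      EBeta (.app (.fixI f ω) t) (.app (Iso.isoSub f (.fixI f ω) ω) t)
  | lettE {L : List (ℕ × Val)} {p : Pat} {v : Val} {t : Term} :
      Matches (Sub.ofList L) p.toVal v → EBeta (.lett p v.toTerm t) (letSig L t)
  | isoApp {L : List (ℕ × Val)} {l : Clauses} {vi : Val} {e : Term} {v : Val} :
      (vi, e) ∈ l.toList → Matches (Sub.ofList L) vi v →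
      EBeta (.app (.clauses l) v.toTerm) (letSig L e)

end LinRev
namespace LinRev

/-! ## Encoding of integers -/

/-- `npos = μX. 1 ⊕ X`, the type of strictly positive naturals. -/
def nposTy : Ty := .mu (.sum .one (.tvar 0))

/-- `Z = 1 ⊕ (npos ⊕ npos)`, the type of integers. -/
def ZTy : Ty := .sum .one (.sum nposTy nposTy)

/-- `enpos n` encodes the strictly positive natural `n+1 : npos`. -/
def enpos : ℕ → Val
  | 0 => .fold (.inl .unit)
  | n + 1 => .fold (.inr (enpos n))

/-- `encZ z` encodes the integer `z : Z`. -/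
def encZ (z : ℤ) : Val :=
  if 0 < z then .inr (.inl (enpos (z.natAbs - 1)))
  else if z = 0 then .inl .unit
  else .inr (.inr (enpos (z.natAbs - 1)))

/-- The successor iso on encoded integers. -/
def succIso : Iso := .clauses
  (.cons (.inl .unit) ((Val.inr (.inl (.fold (.inl .unit)))).toTerm)
  (.cons (.inr (.inl (.var 0))) ((Val.inr (.inl (.fold (.inr (.var 0))))).toTerm)
  (.cons (.inr (.inr (.fold (.inl .unit)))) ((Val.inl .unit).toTerm)
  (.cons (.inr (.inr (.fold (.inr (.var 0))))) ((Val.inr (.inr (.var 0))).toTerm)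
   .nil))))

end LinRev
namespace LinRev

/-! ## Translation of RPP into isos -/

/-- Right-nested tuple of values. -/
def tupleV : List Val → Val
  | [] => .unit
  | [v] => v
  | v :: vs => .pair v (tupleV vs)

/-- Right-nested tuple of types. -/
def tupleTy : List Ty → Ty
  | [] => .one
  | [A] => A
  | A :: As => .prod A (tupleTy As)

/-- Right-nested tuple pattern of variables. -/
def patOfVars : List ℕ → Pat
  | [] => .pvar 0
  | [x] => .pvar x
  | x :: xs => .ppair (.pvar x) (patOfVars xs)

/-- `Z^k`. -/
def Zpow (k : ℕ) : Ty := tupleTy (List.replicate k ZTy)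

/-- Tuple of variables `s, …, s+c-1`. -/
def vt (s c : ℕ) : Val := tupleV ((List.range' s c).map .var)

def pt' (s c : ℕ) : Pat := patOfVars (List.range' s c)

def idIso : Iso := .clauses (.cons (.var 0) (Term.var 0) .nil)

def swapIso : Iso :=
  .clauses (.cons (.pair (.var 0) (.var 1)) ((Val.pair (.var 1) (.var 0)).toTerm) .nil)

def signIso : Iso := .clauses
  (.cons (.inr (.inl (.var 0))) ((Val.inr (.inr (.var 0))).toTerm)
  (.cons (.inr (.inr (.var 0))) ((Val.inr (.inl (.var 0))).toTerm)
  (.cons (.inl .unit) ((Val.inl .unit).toTerm) .nil)))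

/-- Encoding of sequential composition `f ; g` at arity `n`. -/
def compIso (n : ℕ) (wf wg : Iso) : Iso :=
  .clauses (.cons (vt 0 n)
    (.lett (pt' n n) (.app wf (vt 0 n).toTerm)
      (.lett (pt' (2 * n) n) (.app wg (vt n n).toTerm)
        (vt (2 * n) n).toTerm)) .nil)

/-- Encoding of parallel composition `f ∥ g` at arities `j` and `l`. -/
def parIso (j l : ℕ) (wf wg : Iso) : Iso :=
  .clauses (.cons (vt 0 (j + l))
    (.lett (patOfVars (List.range' (j + l) j)) (.app wf (vt 0 j).toTerm)
      (.lett (patOfVars (List.range' (2 * j + l) l)) (.app wg (vt j l).toTerm)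
        (tupleV (((List.range' (j + l) j ++ List.range' (2 * j + l) l)).map .var)).toTerm))
    .nil)

/-- The auxiliary, structurally recursive iterating iso
`ω_aux : Z^k ⊗ npos ↔ Z^k ⊗ npos`. -/
def auxIt (k : ℕ) (wf : Iso) : Iso :=
  .fixI 0 (.clauses
    (.cons (tupleV (((List.range' 0 k).map Val.var) ++ [.fold (.inl .unit)]))
      (.lett (pt' k k) (.app wf (vt 0 k).toTerm)
        (tupleV (((List.range' k k).map Val.var) ++ [Val.fold (.inl .unit)])).toTerm)
    (.cons (tupleV (((List.range' 0 k).map Val.var) ++ [.fold (.inr (.var k))]))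
      (.lett (pt' (k + 1) k) (.app wf (vt 0 k).toTerm)
        (.lett (patOfVars (List.range' (2 * k + 1) k ++ [3 * k + 1]))
          (.app (.ivar 0)
            (tupleV (((List.range' (k + 1) k).map Val.var) ++ [Val.var k])).toTerm)
          (tupleV (((List.range' (2 * k + 1) k).map Val.var)
              ++ [Val.fold (.inr (.var (3 * k + 1)))])).toTerm))
      .nil)))

/-- Encoding of the finite iteration `It[f]`. -/
def itIso (k : ℕ) (wf : Iso) : Iso :=
  .clauses
    (.cons (tupleV (((List.range' 0 k).map Val.var) ++ [.inl .unit]))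
      (tupleV (((List.range' 0 k).map Val.var) ++ [Val.inl .unit])).toTerm
    (.cons (tupleV (((List.range' 0 k).map Val.var) ++ [.inr (.inl (.var k))]))
      (.lett (patOfVars (List.range' (k + 1) k ++ [2 * k + 1]))
        (.app (auxIt k wf) (tupleV (((List.range' 0 k).map Val.var) ++ [Val.var k])).toTerm)
        (tupleV (((List.range' (k + 1) k).map Val.var)
            ++ [Val.inr (.inl (.var (2 * k + 1)))])).toTerm)
    (.cons (tupleV (((List.range' 0 k).map Val.var) ++ [.inr (.inr (.var k))]))
      (.lett (patOfVars (List.range' (k + 1) k ++ [2 * k + 1]))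
        (.app (auxIt k wf) (tupleV (((List.range' 0 k).map Val.var) ++ [Val.var k])).toTerm)
        (tupleV (((List.range' (k + 1) k).map Val.var)
            ++ [Val.inr (.inr (.var (2 * k + 1)))])).toTerm)
      .nil)))

/-- Encoding of the selection `If[f,g,h]`. -/
def ifIso (k : ℕ) (wf wg wh : Iso) : Iso :=
  .clauses
    (.cons (tupleV (((List.range' 0 k).map Val.var) ++ [.inr (.inl (.var k))]))
      (.lett (pt' (k + 1) k) (.app wf (vt 0 k).toTerm)
        (tupleV (((List.range' (k + 1) k).map Val.var)
            ++ [Val.inr (.inl (.var k))])).toTerm)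
    (.cons (tupleV (((List.range' 0 k).map Val.var) ++ [.inl .unit]))
      (.lett (pt' (k + 1) k) (.app wg (vt 0 k).toTerm)
        (tupleV (((List.range' (k + 1) k).map Val.var) ++ [Val.inl .unit])).toTerm)
    (.cons (tupleV (((List.range' 0 k).map Val.var) ++ [.inr (.inr (.var k))]))
      (.lett (pt' (k + 1) k) (.app wh (vt 0 k).toTerm)
        (tupleV (((List.range' (k + 1) k).map Val.var)
            ++ [Val.inr (.inr (.var k))])).toTerm)
      .nil)))

/-- The translation `isos(·)` from RPP to isos of the reversible language. -/
def isosOf : ∀ {k : ℕ}, RPPx.RPP k → Iso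
  | _, .id => idIso
  | _, .suc => succIso
  | _, .pre => succIso.inv
  | _, .sign => signIso
  | _, .swap => swapIso
  | k, .comp f g => compIso k (isosOf f) (isosOf g)
  | _, @RPPx.RPP.par j l f g => parIso j l (isosOf f) (isosOf g)
  | _, @RPPx.RPP.it k f => itIso k (isosOf f)
  | _, @RPPx.RPP.ite k f g h => ifIso k (isosOf f) (isosOf g) (isosOf h)

/-- Encoding of a tuple of integers. -/
def encTup {k : ℕ} (v : Fin k → ℤ) : Val :=
  tupleV (List.ofFn fun i => encZ (v i))

end LinRev


namespace LinRev

/-! ### Infrastructure -/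

theorem Matches.ext {σ σ' : Sub} {p v : Val} (h : Matches σ p v)
    (he : ∀ y, σ y = σ' y) : Matches σ' p v := (funext he : σ = σ') ▸ h

@[simp] theorem toTerm_applySub (v : Val) (σ : Sub) :
    (v.toTerm).applySub σ = (v.applySub σ).toTerm := by
  induction v with
  | unit => rfl
  | var x => simp [Val.toTerm, Term.applySub, Val.applySub]; cases σ x <;> simp [Val.toTerm]
  | inl v ih => simp [Val.toTerm, Term.applySub, Val.applySub, ih]
  | inr v ih => simp [Val.toTerm, Term.applySub, Val.applySub, ih]
  | pair v w ihv ihw => simp [Val.toTerm, Term.applySub, Val.applySub, ihv, ihw]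
  | fold v ih => simp [Val.toTerm, Term.applySub, Val.applySub, ih]

theorem tupleV_cons (v : Val) {l : List Val} (h : l ≠ []) :
    tupleV (v :: l) = .pair v (tupleV l) := by
  cases l with
  | nil => exact absurd rfl h
  | cons a l => rfl

@[simp] theorem applySub_tupleV (l : List Val) (σ : Sub) :
    (tupleV l).applySub σ = tupleV (l.map (Val.applySub σ)) := by
  induction l with
  | nil => rfl
  | cons v l ih =>
    cases l with
    | nil => rfl
    | cons a l => simp only [tupleV, Val.applySub, List.map_cons] at *; rw [ih]

@[simp] theorem applySub_enpos (n : ℕ) (σ : Sub) : (enpos n).applySub σ = enpos n := by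
  induction n with
  | zero => rfl
  | succ n ih => simp [enpos, Val.applySub, ih]

@[simp] theorem applySub_encZ (z : ℤ) (σ : Sub) : (encZ z).applySub σ = encZ z := by
  unfold encZ; split_ifs <;> simp [Val.applySub]

/-- The substitution binding variables `s, s+1, …` to the values in `vs`. -/
def lsub : ℕ → List Val → Sub
  | _, [] => fun _ => none
  | s, v :: vs => Sub.union (fun y => if y = s then some v else none) (lsub (s+1) vs)

theorem lsub_lt {y s : ℕ} (vs : List Val) (h : y < s) : lsub s vs y = none := by
  induction vs generalizing s with
  | nil => rfl
  | cons v vs ih =>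
    simp only [lsub, Sub.union]
    rw [if_neg (by omega), ih (by omega)]
    rfl

theorem lsub_ge {y s : ℕ} (vs : List Val) (h : s + vs.length ≤ y) : lsub s vs y = none := by
  induction vs generalizing s with
  | nil => rfl
  | cons v vs ih =>
    simp only [lsub, Sub.union]
    rw [if_neg (by simp at h; omega), ih (by simp at h; omega)]
    rfl

theorem lsub_get {s i : ℕ} (vs : List Val) (h : i < vs.length) :
    lsub s vs (s + i) = some (vs.get ⟨i, h⟩) := by
  induction vs generalizing s i with
  | nil => simp at h
  | cons v vs ih =>
    cases i with
    | zero => simp [lsub, Sub.union]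
    | succ i =>
      simp only [lsub, Sub.union]
      rw [if_neg (by omega)]
      have h2 : i < vs.length := by simpa using h
      have e : s + (i + 1) = (s + 1) + i := by omega
      rw [e, ih h2]
      rfl

theorem sub_union_apply (σ₁ σ₂ : Sub) (y : ℕ) :
    Sub.union σ₁ σ₂ y = (σ₁ y).orElse (fun _ => σ₂ y) := rfl

/-- `lsub` extended to treat the empty list like the pattern `pvar 0` matching `unit`. -/
def lsub' (s : ℕ) (vs : List Val) : Sub :=
  if vs = [] then (fun y => if y = 0 then some .unit else none) else lsub s vs

theorem lsub'_get {s i : ℕ} (vs : List Val) (h : i < vs.length) :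
    lsub' s vs (s + i) = some (vs.get ⟨i, h⟩) := by
  have : vs ≠ [] := by rintro rfl; simp at h
  rw [lsub', if_neg this]; exact lsub_get vs h

theorem lsub'_out {y s : ℕ} (vs : List Val) (hy : 1 ≤ y)
    (h : y < s ∨ s + vs.length ≤ y) : lsub' s vs y = none := by
  by_cases hvs : vs = []
  · rw [lsub', if_pos hvs]; exact if_neg (by omega)
  · rw [lsub', if_neg hvs]
    rcases h with h | h
    · exact lsub_lt vs h
    · exact lsub_ge vs h

theorem patOfVars_toVal {x : ℕ} {xs : List ℕ} :
    (patOfVars (x :: xs)).toVal = tupleV ((x :: xs).map .var) := by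
  induction xs generalizing x with
  | nil => rfl
  | cons a l ih => simp only [patOfVars, Pat.toVal, ih, List.map_cons, tupleV]

theorem matches_varTuple (s : ℕ) (vs : List Val) :
    Matches (lsub s vs) (tupleV ((List.range' s vs.length).map .var)) (tupleV vs) := by
  induction vs generalizing s with
  | nil => exact Matches.unit
  | cons v vs ih =>
    cases vs with
    | nil =>
      refine (Matches.var s v).ext ?_
      intro y
      simp only [lsub, Sub.union]
      cases h : (if y = s then some v else none) <;> simp [Option.orElse]
    | cons a l =>
      have hne : (a :: l) ≠ [] := by simp
      have hne2 : ((List.range' (s+1) (a::l).length).map Val.var) ≠ [] := by simp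
      rw [List.length_cons, List.range'_succ, List.map_cons,
        tupleV_cons _ hne2, tupleV_cons _ hne]
      exact Matches.pair (Matches.var s v) (ih (s+1))
        (by
          intro y
          by_cases hy : y = s
          · subst hy; exact Or.inr (lsub_lt _ (by omega))
          · exact Or.inl (if_neg hy))

theorem matches_head' (s : ℕ) (vs : List Val) {tp tv : Val} {σt : Sub}
    (ht : Matches σt tp tv) (hd : ∀ y, s ≤ y → y < s + vs.length → σt y = none) :
    Matches (Sub.union (lsub s vs) σt)
      (tupleV (((List.range' s vs.length).map .var) ++ [tp]))
      (tupleV (vs ++ [tv])) := by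
  induction vs generalizing s with
  | nil => exact ht.ext (by intro y; rfl)
  | cons v vs ih =>
    have hne : (vs ++ [tv]) ≠ [] := by simp
    have hne2 : ((List.range' (s+1) vs.length).map Val.var) ++ [tp] ≠ [] := by simp
    rw [List.length_cons, List.range'_succ, List.map_cons, List.cons_append,
      tupleV_cons _ hne2, List.cons_append, tupleV_cons _ hne]
    have hdisj : Sub.disj (fun y => if y = s then some v else none)
        (Sub.union (lsub (s+1) vs) σt) := by
      intro y
      by_cases hy : y = s
      · refine Or.inr ?_
        rw [sub_union_apply, hy, lsub_lt _ (by omega),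
          hd s le_rfl (by simp only [List.length_cons]; omega)]
        rfl
      · exact Or.inl (if_neg hy)
    refine (Matches.pair (Matches.var s v)
      (ih (s+1) (fun y h1 h2 => hd y (by omega) (by simp at h2 ⊢; omega))) hdisj).ext ?_
    intro y
    simp only [lsub, sub_union_apply]
    cases h : (if y = s then some v else none) <;> simp [Option.orElse]

theorem matches_patOfVars (s : ℕ) (vs : List Val) :
    Matches (lsub' s vs) (patOfVars (List.range' s vs.length)).toVal (tupleV vs) := by
  cases vs with
  | nil => exact Matches.var 0 .unit
  | cons v vs =>
    rw [lsub', if_neg (by simp)]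
    rw [List.length_cons, List.range'_succ, patOfVars_toVal, ← List.range'_succ]
    have := matches_varTuple s (v :: vs)
    rwa [List.length_cons] at this

/-! ### Computing substitutions on variable tuples -/

theorem map_range'_applySub (σ : Sub) (s : ℕ) (vs : List Val)
    (h : ∀ i (hi : i < vs.length), (σ (s+i)).getD (.var (s+i)) = vs.get ⟨i, hi⟩) :
    ((List.range' s vs.length).map Val.var).map (Val.applySub σ) = vs := by
  induction vs generalizing s with
  | nil => rfl
  | cons v vs ih =>
    rw [List.length_cons, List.range'_succ]
    simp only [List.map_cons, List.cons.injEq]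
    constructor
    · have := h 0 (by simp)
      simpa [Val.applySub] using this
    · refine ih (s+1) ?_
      intro i hi
      have := h (i+1) (by simpa using Nat.succ_lt_succ hi)
      rw [show s + (i+1) = s + 1 + i by omega] at this
      simpa using this

theorem map_range'_applySub_id (σ : Sub) (s c : ℕ)
    (h : ∀ i, i < c → σ (s+i) = none) :
    ((List.range' s c).map Val.var).map (Val.applySub σ) = (List.range' s c).map Val.var := by
  induction c generalizing s with
  | zero => rfl
  | succ c ih =>
    rw [List.range'_succ]
    simp only [List.map_cons, List.cons.injEq]
    have h0 : σ s = none := by have := h 0 (by omega); simpa using this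
    refine ⟨by simp [Val.applySub, h0], ih (s+1) ?_⟩
    intro i hi
    have := h (i+1) (by omega)
    rwa [show s + (i+1) = s + 1 + i by omega] at this

/-! ### Steps congruences -/

theorem steps_app (ω : Iso) {t t' : Term} (h : Steps t t') :
    Steps (.app ω t) (.app ω t') :=
  Relation.ReflTransGen.lift (Term.app ω) (fun _ _ => Step.appC) _ _ h

theorem steps_lett (p : Pat) (t₂ : Term) {t₁ t₁' : Term} (h : Steps t₁ t₁') :
    Steps (.lett p t₁ t₂) (.lett p t₁' t₂) :=
  Relation.ReflTransGen.lift (fun t => Term.lett p t t₂) (fun _ _ => Step.lettC) _ _ h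

theorem steps_letstep {p : Pat} {X t : Term} {w : Val} {σ : Sub}
    (hX : Steps X w.toTerm) (hm : Matches σ p.toVal w) :
    Steps (.lett p X t) (t.applySub σ) :=
  (steps_lett p t hX).trans (Relation.ReflTransGen.single (Step.lettE hm))

end LinRev


namespace LinRev

/-! ### Iso-substitution lemmas -/

@[simp] theorem isoSub_toTerm (f : ℕ) (w : Iso) (v : Val) :
    Term.isoSub f w v.toTerm = v.toTerm := by
  induction v with
  | unit => simp [Val.toTerm, Term.isoSub]
  | var x => simp [Val.toTerm, Term.isoSub]
  | inl v ih => simp [Val.toTerm, Term.isoSub, ih]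
  | inr v ih => simp [Val.toTerm, Term.isoSub, ih]
  | pair v w ihv ihw => simp [Val.toTerm, Term.isoSub, ihv, ihw]
  | fold v ih => simp [Val.toTerm, Term.isoSub, ih]

theorem isoSub_idIso (f w) : Iso.isoSub f w idIso = idIso := by
  simp [idIso, Iso.isoSub, Clauses.isoSub, Term.isoSub]

theorem isoSub_succIso (f w) : Iso.isoSub f w succIso = succIso := by
  simp only [succIso, Iso.isoSub, Clauses.isoSub, isoSub_toTerm]

@[simp] theorem asVal_toTerm (v : Val) : (v.toTerm).asVal = some v := by
  induction v with
  | unit => rfl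
  | var x => rfl
  | inl v ih => simp [Val.toTerm, Term.asVal, ih]
  | inr v ih => simp [Val.toTerm, Term.asVal, ih]
  | pair v w ihv ihw => simp [Val.toTerm, Term.asVal, ihv, ihw]
  | fold v ih => simp [Val.toTerm, Term.asVal, ih]

theorem invAux_toTerm (acc : Term) (u : Val) : invAux acc u.toTerm = some (u, acc) := by
  cases u <;> simp [Val.toTerm, invAux, Term.asVal, asVal_toTerm]

/-- The inverse of the successor iso, computed explicitly. -/
def preIsoC : Clauses :=
  (.cons (.inr (.inl (.fold (.inl .unit)))) ((Val.inl .unit).toTerm)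
  (.cons (.inr (.inl (.fold (.inr (.var 0))))) ((Val.inr (.inl (.var 0))).toTerm)
  (.cons (.inl .unit) ((Val.inr (.inr (.fold (.inl .unit)))).toTerm)
  (.cons (.inr (.inr (.var 0))) ((Val.inr (.inr (.fold (.inr (.var 0))))).toTerm)
   .nil))))

theorem succIso_inv : succIso.inv = .clauses preIsoC := by
  simp only [succIso, Iso.inv, Clauses.inv, invAux_toTerm, preIsoC]

theorem isoSub_succIsoInv (f w) : Iso.isoSub f w succIso.inv = succIso.inv := by
  rw [succIso_inv]
  simp only [preIsoC, Iso.isoSub, Clauses.isoSub, isoSub_toTerm]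

theorem isoSub_signIso (f w) : Iso.isoSub f w signIso = signIso := by
  simp only [signIso, Iso.isoSub, Clauses.isoSub, isoSub_toTerm]

theorem isoSub_swapIso (f w) : Iso.isoSub f w swapIso = swapIso := by
  simp only [swapIso, Iso.isoSub, Clauses.isoSub, isoSub_toTerm]

theorem isoSub_compIso (f w n a b) :
    Iso.isoSub f w (compIso n a b) = compIso n (Iso.isoSub f w a) (Iso.isoSub f w b) := by
  simp only [compIso, Iso.isoSub, Clauses.isoSub, Term.isoSub, isoSub_toTerm]

theorem isoSub_parIso (f w j l a b) :
    Iso.isoSub f w (parIso j l a b) = parIso j l (Iso.isoSub f w a) (Iso.isoSub f w b) := by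
  simp only [parIso, Iso.isoSub, Clauses.isoSub, Term.isoSub, isoSub_toTerm]

theorem isoSub_auxIt_zero (w k a) : Iso.isoSub 0 w (auxIt k a) = auxIt k a := by
  simp [auxIt, Iso.isoSub]

theorem isoSub_auxIt (f w k a) (hf : f ≠ 0) :
    Iso.isoSub f w (auxIt k a) = auxIt k (Iso.isoSub f w a) := by
  simp only [auxIt, Iso.isoSub, if_neg hf, Clauses.isoSub, Term.isoSub, isoSub_toTerm,
    if_neg (Ne.symm hf)]

theorem isoSub_itIso_zero (w k a) :
    Iso.isoSub 0 w (itIso k a) = itIso k a := by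
  simp only [itIso, Iso.isoSub, Clauses.isoSub, Term.isoSub, isoSub_toTerm,
    isoSub_auxIt_zero]

theorem isoSub_itIso (f w k a) (hf : f ≠ 0) :
    Iso.isoSub f w (itIso k a) = itIso k (Iso.isoSub f w a) := by
  simp only [itIso, Iso.isoSub, Clauses.isoSub, Term.isoSub, isoSub_toTerm,
    isoSub_auxIt f w k a hf]

theorem isoSub_ifIso (f w k a b c) :
    Iso.isoSub f w (ifIso k a b c) =
      ifIso k (Iso.isoSub f w a) (Iso.isoSub f w b) (Iso.isoSub f w c) := by
  simp only [ifIso, Iso.isoSub, Clauses.isoSub, Term.isoSub, isoSub_toTerm]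

theorem isosOf_isoSub {k : ℕ} (g : RPPx.RPP k) (f : ℕ) (w : Iso) :
    Iso.isoSub f w (isosOf g) = isosOf g := by
  induction g with
  | id => exact isoSub_idIso f w
  | suc => exact isoSub_succIso f w
  | pre => exact isoSub_succIsoInv f w
  | sign => exact isoSub_signIso f w
  | swap => exact isoSub_swapIso f w
  | comp a b iha ihb => simp [isosOf, isoSub_compIso, iha, ihb]
  | par a b iha ihb => simp [isosOf, isoSub_parIso, iha, ihb]
  | it a ih =>
    by_cases hf : f = 0
    · subst hf; simp [isosOf, isoSub_itIso_zero]
    · simp [isosOf, isoSub_itIso _ _ _ _ hf, ih]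
  | ite a b c iha ihb ihc => simp [isosOf, isoSub_ifIso, iha, ihb, ihc]

end LinRev


namespace LinRev

/-! ### Unfolding the auxiliary iteration iso -/

/-- The clauses inside `auxIt`, before substituting the recursive variable. -/
def auxItC0 (k : ℕ) (wf : Iso) : Clauses :=
  (.cons (tupleV (((List.range' 0 k).map Val.var) ++ [.fold (.inl .unit)]))
      (.lett (pt' k k) (.app wf (vt 0 k).toTerm)
        (tupleV (((List.range' k k).map Val.var) ++ [Val.fold (.inl .unit)])).toTerm)
    (.cons (tupleV (((List.range' 0 k).map Val.var) ++ [.fold (.inr (.var k))]))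
      (.lett (pt' (k + 1) k) (.app wf (vt 0 k).toTerm)
        (.lett (patOfVars (List.range' (2 * k + 1) k ++ [3 * k + 1]))
          (.app (.ivar 0)
            (tupleV (((List.range' (k + 1) k).map Val.var) ++ [Val.var k])).toTerm)
          (tupleV (((List.range' (2 * k + 1) k).map Val.var)
              ++ [Val.fold (.inr (.var (3 * k + 1)))])).toTerm))
      .nil))

/-- The clauses of `auxIt` after one recursive unfolding. -/
def auxItC (k : ℕ) (wf : Iso) : Clauses :=
  (.cons (tupleV (((List.range' 0 k).map Val.var) ++ [.fold (.inl .unit)]))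
      (.lett (pt' k k) (.app wf (vt 0 k).toTerm)
        (tupleV (((List.range' k k).map Val.var) ++ [Val.fold (.inl .unit)])).toTerm)
    (.cons (tupleV (((List.range' 0 k).map Val.var) ++ [.fold (.inr (.var k))]))
      (.lett (pt' (k + 1) k) (.app wf (vt 0 k).toTerm)
        (.lett (patOfVars (List.range' (2 * k + 1) k ++ [3 * k + 1]))
          (.app (auxIt k wf)
            (tupleV (((List.range' (k + 1) k).map Val.var) ++ [Val.var k])).toTerm)
          (tupleV (((List.range' (2 * k + 1) k).map Val.var)
              ++ [Val.fold (.inr (.var (3 * k + 1)))])).toTerm))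
      .nil))

theorem auxIt_eq (k : ℕ) (wf : Iso) : auxIt k wf = .fixI 0 (.clauses (auxItC0 k wf)) := rfl

theorem auxIt_step (k : ℕ) (wf : Iso) (hw : Iso.isoSub 0 (auxIt k wf) wf = wf) (t : Term) :
    Step (.app (auxIt k wf) t) (.app (.clauses (auxItC k wf)) t) := by
  have h : Iso.isoSub 0 (auxIt k wf) (.clauses (auxItC0 k wf)) = .clauses (auxItC k wf) := by
    simp only [auxItC0, auxItC, Iso.isoSub, Clauses.isoSub, Term.isoSub, isoSub_toTerm,
      if_pos rfl, hw, reduceIte]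
  rw [auxIt_eq k wf, ← h]
  exact Step.isoRec

/-! ### Evaluating substitutions on variable tuples -/

theorem applySub_var (σ : Sub) (y : ℕ) : Val.applySub σ (.var y) = (σ y).getD (.var y) := rfl

theorem map_applySub_lsub_union (vs : List Val) (σt : Sub) (c : ℕ) (hlen : vs.length = c) :
    ((List.range' 0 c).map Val.var).map (Val.applySub (Sub.union (lsub 0 vs) σt)) = vs := by
  subst hlen
  refine map_range'_applySub _ _ _ ?_
  intro i hi
  rw [sub_union_apply, lsub_get vs hi]
  rfl

theorem map_applySub_lsub' (s : ℕ) (vs : List Val) (c : ℕ) (hlen : vs.length = c) :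
    ((List.range' s c).map Val.var).map (Val.applySub (lsub' s vs)) = vs := by
  subst hlen
  refine map_range'_applySub _ _ _ ?_
  intro i hi
  rw [lsub'_get vs hi]
  rfl

theorem map_applySub_out (σ : Sub) (s c : ℕ) (h : ∀ y, s ≤ y → y < s + c → σ y = none) :
    ((List.range' s c).map Val.var).map (Val.applySub σ) = (List.range' s c).map Val.var :=
  map_range'_applySub_id σ s c (fun i hi => h (s+i) (by omega) (by omega))

theorem union_out (vs : List Val) (σt : Sub) (y : ℕ) (h1 : vs.length ≤ y)
    (h2 : σt y = none) : Sub.union (lsub 0 vs) σt y = none := by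
  rw [sub_union_apply, lsub_ge vs (by omega), h2]
  rfl

/-! ### Correctness of the auxiliary iteration iso -/

theorem aux_correct (k : ℕ) (wf : Iso) (g : (Fin k → ℤ) → (Fin k → ℤ))
    (hw : Iso.isoSub 0 (auxIt k wf) wf = wf)
    (hf : ∀ x, Steps (.app wf (encTup x).toTerm) (encTup (g x)).toTerm) :
    ∀ (m : ℕ) (x : Fin k → ℤ),
      Steps (.app (auxIt k wf)
          (tupleV ((List.ofFn fun i => encZ (x i)) ++ [enpos m])).toTerm)
        (tupleV ((List.ofFn fun i => encZ ((g^[m+1] x) i)) ++ [enpos m])).toTerm := by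
  intro m
  induction m with
  | zero =>
    intro x
    simp only [Nat.zero_add, Function.iterate_one]
    set es : List Val := List.ofFn fun i => encZ (x i) with hes
    set es₁ : List Val := List.ofFn fun i => encZ (g x i) with hes₁
    have hlen : es.length = k := List.length_ofFn
    have hlen₁ : es₁.length = k := List.length_ofFn
    set σt : Sub := (fun _ => none) with hσt
    set σ₀ : Sub := Sub.union (lsub 0 es) σt with hσ₀
    have step1 : Step (.app (auxIt k wf) (tupleV (es ++ [enpos 0])).toTerm)
        (.app (.clauses (auxItC k wf)) (tupleV (es ++ [enpos 0])).toTerm) :=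
      auxIt_step k wf hw _
    have hm0 : Matches σ₀ (tupleV (((List.range' 0 k).map Val.var) ++ [.fold (.inl .unit)]))
        (tupleV (es ++ [enpos 0])) := by
      have h := matches_head' 0 es (σt := σt) (Matches.fold (Matches.inl Matches.unit))
        (fun y _ _ => rfl)
      rwa [hlen] at h
    have step2 : Step (.app (.clauses (auxItC k wf)) (tupleV (es ++ [enpos 0])).toTerm)
        ((Term.lett (pt' k k) (.app wf (vt 0 k).toTerm)
          (tupleV (((List.range' k k).map Val.var)
            ++ [Val.fold (.inl .unit)])).toTerm).applySub σ₀) := by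
      refine Step.isoApp ?_ hm0
      simp [auxItC, Clauses.toList]
    have e1 : (Term.lett (pt' k k) (.app wf (vt 0 k).toTerm)
          (tupleV (((List.range' k k).map Val.var)
            ++ [Val.fold (.inl .unit)])).toTerm).applySub σ₀
        = Term.lett (pt' k k) (.app wf (tupleV es).toTerm)
            (tupleV (((List.range' k k).map Val.var) ++ [Val.fold (.inl .unit)])).toTerm := by
      simp only [Term.applySub, toTerm_applySub, applySub_tupleV, List.map_append, vt]
      rw [map_applySub_lsub_union es σt k hlen,
        map_applySub_out σ₀ k k (fun y hy1 hy2 => union_out es σt y (by omega) rfl)]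
      simp [Val.applySub]
    have hX₁ : Steps (.app wf (tupleV es).toTerm) ((tupleV es₁).toTerm) := hf x
    have hm1 : Matches (lsub' k es₁) (pt' k k).toVal (tupleV es₁) := by
      have := matches_patOfVars k es₁
      rwa [hlen₁] at this
    have e2 : ((tupleV (((List.range' k k).map Val.var)
            ++ [Val.fold (.inl .unit)])).toTerm).applySub (lsub' k es₁)
        = (tupleV (es₁ ++ [enpos 0])).toTerm := by
      rw [toTerm_applySub]
      simp only [applySub_tupleV, List.map_append]
      rw [map_applySub_lsub' k es₁ k hlen₁]
      simp [Val.applySub, enpos]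
    refine Relation.ReflTransGen.head step1 (Relation.ReflTransGen.head step2 ?_)
    rw [e1, ← e2]
    exact steps_letstep hX₁ hm1
  | succ m ih =>
    intro x
    set es : List Val := List.ofFn fun i => encZ (x i) with hes
    set es₁ : List Val := List.ofFn fun i => encZ (g x i) with hes₁
    set es₂ : List Val := List.ofFn fun i => encZ ((g^[m+1] (g x)) i) with hes₂
    have hlen : es.length = k := List.length_ofFn
    have hlen₁ : es₁.length = k := List.length_ofFn
    have hlen₂ : es₂.length = k := List.length_ofFn
    set σt : Sub := (fun y => if y = k then some (enpos m) else none) with hσt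
    set σ₀ : Sub := Sub.union (lsub 0 es) σt with hσ₀
    set σ₁ : Sub := lsub' (k+1) es₁ with hσ₁
    set σ₂ : Sub := lsub' (2*k+1) (es₂ ++ [enpos m]) with hσ₂
    set P₂ : Pat := patOfVars (List.range' (2 * k + 1) k ++ [3 * k + 1]) with hP₂
    set T₃ : Val := tupleV (((List.range' (2 * k + 1) k).map Val.var)
        ++ [Val.fold (.inr (.var (3 * k + 1)))]) with hT₃
    have step1 : Step (.app (auxIt k wf) (tupleV (es ++ [enpos (m+1)])).toTerm)
        (.app (.clauses (auxItC k wf)) (tupleV (es ++ [enpos (m+1)])).toTerm) :=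
      auxIt_step k wf hw _
    have hm0 : Matches σ₀
        (tupleV (((List.range' 0 k).map Val.var) ++ [.fold (.inr (.var k))]))
        (tupleV (es ++ [enpos (m+1)])) := by
      have h := matches_head' 0 es (σt := σt) (Matches.fold (Matches.inr (Matches.var k (enpos m))))
        (fun y _ hy => by rw [hσt]; exact if_neg (by omega))
      rwa [hlen] at h
    have step2 : Step (.app (.clauses (auxItC k wf)) (tupleV (es ++ [enpos (m+1)])).toTerm)
        ((Term.lett (pt' (k + 1) k) (.app wf (vt 0 k).toTerm)
          (.lett P₂
            (.app (auxIt k wf)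
              (tupleV (((List.range' (k + 1) k).map Val.var) ++ [Val.var k])).toTerm)
            T₃.toTerm)).applySub σ₀) := by
      refine Step.isoApp ?_ hm0
      simp [auxItC, Clauses.toList, hP₂, hT₃]
    have hσ₀k : σ₀ k = some (enpos m) := by
      rw [hσ₀, sub_union_apply, lsub_ge es (by omega)]
      simp [hσt]
    have hσ₀out : ∀ y, k + 1 ≤ y → σ₀ y = none := by
      intro y hy
      refine union_out es σt y (by omega) ?_
      rw [hσt]; exact if_neg (by omega)
    have e1 : (Term.lett (pt' (k + 1) k) (.app wf (vt 0 k).toTerm)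
          (.lett P₂
            (.app (auxIt k wf)
              (tupleV (((List.range' (k + 1) k).map Val.var) ++ [Val.var k])).toTerm)
            T₃.toTerm)).applySub σ₀
        = Term.lett (pt' (k + 1) k) (.app wf (tupleV es).toTerm)
            (.lett P₂
              (.app (auxIt k wf)
                (tupleV (((List.range' (k + 1) k).map Val.var) ++ [enpos m])).toTerm)
              T₃.toTerm) := by
      simp only [Term.applySub, toTerm_applySub, applySub_tupleV, List.map_append, vt, hT₃]
      rw [map_applySub_lsub_union es σt k hlen,
        map_applySub_out σ₀ (k+1) k (fun y hy1 hy2 => hσ₀out y (by omega)),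
        map_applySub_out σ₀ (2*k+1) k (fun y hy1 hy2 => hσ₀out y (by omega))]
      simp [Val.applySub, applySub_var, hσ₀k, hσ₀out (3*k+1) (by omega)]
    have hX₁ : Steps (.app wf (tupleV es).toTerm) ((tupleV es₁).toTerm) := hf x
    have hm1 : Matches σ₁ (pt' (k+1) k).toVal (tupleV es₁) := by
      have := matches_patOfVars (k+1) es₁
      rwa [hlen₁] at this
    have hσ₁out : ∀ y, 2*k + 1 ≤ y → σ₁ y = none := by
      intro y hy
      exact lsub'_out es₁ (by omega) (Or.inr (by omega))
    have e2 : (Term.lett P₂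
            (.app (auxIt k wf)
              (tupleV (((List.range' (k + 1) k).map Val.var) ++ [enpos m])).toTerm)
            T₃.toTerm).applySub σ₁
        = Term.lett P₂
            (.app (auxIt k wf) (tupleV (es₁ ++ [enpos m])).toTerm)
            T₃.toTerm := by
      simp only [Term.applySub, toTerm_applySub, applySub_tupleV, List.map_append, hT₃]
      rw [map_applySub_lsub' (k+1) es₁ k hlen₁,
        map_applySub_out σ₁ (2*k+1) k (fun y hy1 hy2 => hσ₁out y (by omega))]
      simp [Val.applySub, applySub_var, hσ₁out (3*k+1) (by omega)]
    have hX₂ : Steps (.app (auxIt k wf) (tupleV (es₁ ++ [enpos m])).toTerm)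
        ((tupleV (es₂ ++ [enpos m])).toTerm) := ih (g x)
    have hRange : List.range' (2 * k + 1) k ++ [3 * k + 1] = List.range' (2 * k + 1) (k + 1) := by
      rw [List.range'_concat]
      congr 1
      simp
      omega
    have hm2 : Matches σ₂ P₂.toVal (tupleV (es₂ ++ [enpos m])) := by
      rw [hP₂, hRange]
      have := matches_patOfVars (2*k+1) (es₂ ++ [enpos m])
      rwa [show (es₂ ++ [enpos m]).length = k + 1 by simp [hlen₂]] at this
    have e3 : (T₃.toTerm).applySub σ₂ = (tupleV (es₂ ++ [enpos (m+1)])).toTerm := by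
      have hmain : ((List.range' (2*k+1) k).map Val.var).map (Val.applySub σ₂) = es₂ := by
        have h := map_range'_applySub σ₂ (2*k+1) es₂ (fun i hi => by
          rw [hσ₂, show 2*k+1+i = 2*k+1+i from rfl,
            lsub'_get (es₂ ++ [enpos m]) (show i < (es₂ ++ [enpos m]).length by simp; omega)]
          simp only [Option.getD_some, List.get_eq_getElem]
          exact List.getElem_append_left hi)
        rwa [hlen₂] at h
      have hσ₂last : σ₂ (3*k+1) = some (enpos m) := by
        rw [hσ₂, show 3*k+1 = 2*k+1+k from by omega,
          lsub'_get (es₂ ++ [enpos m]) (show k < (es₂ ++ [enpos m]).length by simp; omega)]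
        congr 1
        simp [List.get_eq_getElem, List.getElem_append_right, hlen₂]
      rw [toTerm_applySub, hT₃]
      simp only [applySub_tupleV, List.map_append]
      rw [hmain]
      simp [Val.applySub, applySub_var, hσ₂last, enpos]
    refine Relation.ReflTransGen.head step1 (Relation.ReflTransGen.head step2 ?_)
    rw [e1]
    refine Relation.ReflTransGen.trans (steps_letstep hX₁ hm1) ?_
    rw [e2]
    refine Relation.ReflTransGen.trans (steps_letstep hX₂ hm2) ?_
    rw [e3]
    simp only [Function.iterate_succ_apply]
    exact Relation.ReflTransGen.refl

end LinRev


namespace LinRev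

/-! ### More substitution helpers -/

theorem lsub_get0 (vs : List Val) {i : ℕ} (h : i < vs.length) :
    lsub 0 vs i = some (vs.get ⟨i, h⟩) := by
  have := lsub_get (s := 0) vs h
  simpa using this

theorem map_applySub_lsub (vs : List Val) (c : ℕ) (hlen : vs.length = c) :
    ((List.range' 0 c).map Val.var).map (Val.applySub (lsub 0 vs)) = vs := by
  subst hlen
  refine map_range'_applySub _ _ _ ?_
  intro i hi
  rw [lsub_get vs hi]
  rfl

@[simp] theorem applySub_ofFn_encZ {n : ℕ} (σ : Sub) (f : Fin n → ℤ) :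
    (List.ofFn fun i => encZ (f i)).map (Val.applySub σ) = List.ofFn fun i => encZ (f i) := by
  simp [List.map_ofFn, Function.comp_def]

theorem encZ_zero : encZ 0 = .inl .unit := by simp [encZ]

theorem encZ_pos {z : ℤ} (h : 0 < z) : encZ z = .inr (.inl (enpos (z.natAbs - 1))) := by
  simp [encZ, h]

theorem encZ_neg {z : ℤ} (h : z < 0) : encZ z = .inr (.inr (enpos (z.natAbs - 1))) := by
  simp [encZ, h, not_lt.mpr h.le, h.ne]


theorem succ_step (z : ℤ) : Steps (.app succIso (encZ z).toTerm) (encZ (z+1)).toTerm := by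
  rcases lt_trichotomy z 0 with hneg | rfl | hpos
  · by_cases hm1 : z = -1
    · subst hm1
      refine Relation.ReflTransGen.single ?_
      rw [show encZ (-1) = Val.inr (.inr (.fold (.inl .unit))) from by
          rw [encZ_neg (by omega)]; rfl,
        show encZ (-1+1) = Val.inl .unit from by norm_num [encZ_zero],
        show (Val.inl .unit).toTerm
            = ((Val.inl .unit).toTerm).applySub (fun _ => none) from rfl]
      exact Step.isoApp (by simp [succIso, Clauses.toList])
        (Matches.inr (Matches.inr (Matches.fold (Matches.inl Matches.unit))))
    · refine Relation.ReflTransGen.single ?_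
      set n : ℕ := z.natAbs - 2 with hn
      rw [show encZ z = Val.inr (.inr (.fold (.inr (enpos n)))) from by
          rw [encZ_neg hneg, show z.natAbs - 1 = n + 1 from by omega]; rfl,
        show encZ (z+1) = Val.inr (.inr (enpos n)) from by
          rw [encZ_neg (by omega), show (z+1).natAbs - 1 = n from by omega],
        show (Val.inr (.inr (enpos n))).toTerm
            = ((Val.inr (.inr (.var 0))).toTerm).applySub
                (fun y => if y = 0 then some (enpos n) else none) from by
          rw [toTerm_applySub]; rfl]
      exact Step.isoApp (by simp [succIso, Clauses.toList])
        (Matches.inr (Matches.inr (Matches.fold (Matches.inr (Matches.var 0 (enpos n))))))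
  · refine Relation.ReflTransGen.single ?_
    rw [encZ_zero,
      show encZ (0+1) = Val.inr (.inl (.fold (.inl .unit))) from by
        rw [encZ_pos (by omega)]; rfl,
      show (Val.inr (.inl (.fold (.inl .unit)))).toTerm
          = ((Val.inr (.inl (.fold (.inl .unit)))).toTerm).applySub (fun _ => none) from by
        rw [toTerm_applySub]; rfl]
    exact Step.isoApp (by simp [succIso, Clauses.toList]) (Matches.inl Matches.unit)
  · refine Relation.ReflTransGen.single ?_
    set n : ℕ := z.natAbs - 1 with hn
    rw [show encZ z = Val.inr (.inl (enpos n)) from encZ_pos hpos,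
      show encZ (z+1) = Val.inr (.inl (.fold (.inr (enpos n)))) from by
        rw [encZ_pos (by omega), show (z+1).natAbs - 1 = n + 1 from by omega]; rfl,
      show (Val.inr (.inl (.fold (.inr (enpos n))))).toTerm
          = ((Val.inr (.inl (.fold (.inr (.var 0))))).toTerm).applySub
              (fun y => if y = 0 then some (enpos n) else none) from by
        rw [toTerm_applySub]; rfl]
    exact Step.isoApp (by simp [succIso, Clauses.toList])
      (Matches.inr (Matches.inl (Matches.var 0 (enpos n))))

theorem pre_step (z : ℤ) : Steps (.app succIso.inv (encZ z).toTerm) (encZ (z-1)).toTerm := by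
  rw [succIso_inv]
  rcases lt_trichotomy z 0 with hneg | rfl | hpos
  · refine Relation.ReflTransGen.single ?_
    set n : ℕ := z.natAbs - 1 with hn
    rw [show encZ z = Val.inr (.inr (enpos n)) from encZ_neg hneg,
      show encZ (z-1) = Val.inr (.inr (.fold (.inr (enpos n)))) from by
        rw [encZ_neg (by omega), show (z-1).natAbs - 1 = n + 1 from by omega]; rfl,
      show (Val.inr (.inr (.fold (.inr (enpos n))))).toTerm
          = ((Val.inr (.inr (.fold (.inr (.var 0))))).toTerm).applySub
              (fun y => if y = 0 then some (enpos n) else none) from by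
        rw [toTerm_applySub]; rfl]
    exact Step.isoApp (by simp [preIsoC, Clauses.toList])
      (Matches.inr (Matches.inr (Matches.var 0 (enpos n))))
  · refine Relation.ReflTransGen.single ?_
    rw [encZ_zero,
      show encZ ((0:ℤ)-1) = Val.inr (.inr (.fold (.inl .unit))) from by
        rw [encZ_neg (by omega)]; rfl,
      show (Val.inr (.inr (.fold (.inl .unit)))).toTerm
          = ((Val.inr (.inr (.fold (.inl .unit)))).toTerm).applySub (fun _ => none) from by
        rw [toTerm_applySub]; rfl]
    exact Step.isoApp (by simp [preIsoC, Clauses.toList]) (Matches.inl Matches.unit)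
  · by_cases h1 : z = 1
    · subst h1
      refine Relation.ReflTransGen.single ?_
      rw [show encZ 1 = Val.inr (.inl (.fold (.inl .unit))) from by
          rw [encZ_pos (by omega)]; rfl,
        show encZ ((1:ℤ)-1) = Val.inl .unit from by norm_num [encZ_zero],
        show (Val.inl .unit).toTerm
            = ((Val.inl .unit).toTerm).applySub (fun _ => none) from rfl]
      exact Step.isoApp (by simp [preIsoC, Clauses.toList])
        (Matches.inr (Matches.inl (Matches.fold (Matches.inl Matches.unit))))
    · refine Relation.ReflTransGen.single ?_
      set n : ℕ := z.natAbs - 2 with hn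
      rw [show encZ z = Val.inr (.inl (.fold (.inr (enpos n)))) from by
          rw [encZ_pos hpos, show z.natAbs - 1 = n + 1 from by omega]; rfl,
        show encZ (z-1) = Val.inr (.inl (enpos n)) from by
          rw [encZ_pos (by omega), show (z-1).natAbs - 1 = n from by omega],
        show (Val.inr (.inl (enpos n))).toTerm
            = ((Val.inr (.inl (.var 0))).toTerm).applySub
                (fun y => if y = 0 then some (enpos n) else none) from by
          rw [toTerm_applySub]; rfl]
      exact Step.isoApp (by simp [preIsoC, Clauses.toList])
        (Matches.inr (Matches.inl (Matches.fold (Matches.inr (Matches.var 0 (enpos n))))))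

theorem sign_step (z : ℤ) : Steps (.app signIso (encZ z).toTerm) (encZ (-z)).toTerm := by
  rcases lt_trichotomy z 0 with hneg | rfl | hpos
  · refine Relation.ReflTransGen.single ?_
    set n : ℕ := z.natAbs - 1 with hn
    rw [show encZ z = Val.inr (.inr (enpos n)) from encZ_neg hneg,
      show encZ (-z) = Val.inr (.inl (enpos n)) from by
        rw [encZ_pos (by omega), show (-z).natAbs - 1 = n from by omega],
      show (Val.inr (.inl (enpos n))).toTerm
          = ((Val.inr (.inl (.var 0))).toTerm).applySub
              (fun y => if y = 0 then some (enpos n) else none) from by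
        rw [toTerm_applySub]; rfl]
    exact Step.isoApp (by simp [signIso, Clauses.toList])
      (Matches.inr (Matches.inr (Matches.var 0 (enpos n))))
  · refine Relation.ReflTransGen.single ?_
    rw [show -(0:ℤ) = 0 from by norm_num, encZ_zero,
      show (Val.inl Val.unit).toTerm
          = ((Val.inl Val.unit).toTerm).applySub (fun _ => none) from rfl]
    exact Step.isoApp (by simp [signIso, Clauses.toList]) (Matches.inl Matches.unit)
  · refine Relation.ReflTransGen.single ?_
    set n : ℕ := z.natAbs - 1 with hn
    rw [show encZ z = Val.inr (.inl (enpos n)) from encZ_pos hpos,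
      show encZ (-z) = Val.inr (.inr (enpos n)) from by
        rw [encZ_neg (by omega), show (-z).natAbs - 1 = n from by omega],
      show (Val.inr (.inr (enpos n))).toTerm
          = ((Val.inr (.inr (.var 0))).toTerm).applySub
              (fun y => if y = 0 then some (enpos n) else none) from by
        rw [toTerm_applySub]; rfl]
    exact Step.isoApp (by simp [signIso, Clauses.toList])
      (Matches.inr (Matches.inl (Matches.var 0 (enpos n))))

/-! ### Correctness of the translation -/


theorem isos_correct : ∀ {k : ℕ} (f : RPPx.RPP k) (x : Fin k → ℤ),
    Steps (.app (isosOf f) (encTup x).toTerm) (encTup (RPPx.eval f x)).toTerm := by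
  intro k f
  induction f with
  | id =>
    intro x
    refine Relation.ReflTransGen.single ?_
    rw [show isosOf RPPx.RPP.id = idIso from rfl,
      show RPPx.eval RPPx.RPP.id x = x from rfl,
      show (encTup x).toTerm
        = (Term.var 0).applySub (fun y => if y = 0 then some (encTup x) else none) from by
        simp [Term.applySub]]
    exact Step.isoApp (by simp [idIso, Clauses.toList]) (Matches.var 0 (encTup x))
  | suc =>
    intro x
    have h1 : encTup x = encZ (x 0) := by
      simp [encTup, List.ofFn_succ, List.ofFn_zero, tupleV]
    have h2 : encTup (RPPx.eval .suc x) = encZ (x 0 + 1) := by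
      simp [encTup, RPPx.eval, List.ofFn_succ, List.ofFn_zero, tupleV]
    rw [show isosOf RPPx.RPP.suc = succIso from rfl, h1, h2]
    exact succ_step (x 0)
  | pre =>
    intro x
    have h1 : encTup x = encZ (x 0) := by
      simp [encTup, List.ofFn_succ, List.ofFn_zero, tupleV]
    have h2 : encTup (RPPx.eval .pre x) = encZ (x 0 - 1) := by
      simp [encTup, RPPx.eval, List.ofFn_succ, List.ofFn_zero, tupleV]
    rw [show isosOf RPPx.RPP.pre = succIso.inv from rfl, h1, h2]
    exact pre_step (x 0)
  | sign =>
    intro x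
    have h1 : encTup x = encZ (x 0) := by
      simp [encTup, List.ofFn_succ, List.ofFn_zero, tupleV]
    have h2 : encTup (RPPx.eval .sign x) = encZ (-(x 0)) := by
      simp [encTup, RPPx.eval, List.ofFn_succ, List.ofFn_zero, tupleV]
    rw [show isosOf RPPx.RPP.sign = signIso from rfl, h1, h2]
    exact sign_step (x 0)
  | swap =>
    intro x
    have h1 : encTup x = .pair (encZ (x 0)) (encZ (x 1)) := by
      simp [encTup, List.ofFn_succ, List.ofFn_zero, tupleV]
    have h2 : encTup (RPPx.eval .swap x) = .pair (encZ (x 1)) (encZ (x 0)) := by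
      have r0 : (0 : Fin 2).rev = 1 := by decide
      have r1 : (1 : Fin 2).rev = 0 := by decide
      simp [encTup, RPPx.eval, List.ofFn_succ, List.ofFn_zero, tupleV, r0, r1]
    refine Relation.ReflTransGen.single ?_
    rw [show isosOf RPPx.RPP.swap = swapIso from rfl, h1, h2,
      show (Val.pair (encZ (x 1)) (encZ (x 0))).toTerm
          = ((Val.pair (.var 1) (.var 0)).toTerm).applySub
              (Sub.union (fun y => if y = 0 then some (encZ (x 0)) else none)
                (fun y => if y = 1 then some (encZ (x 1)) else none)) from by
        rw [toTerm_applySub]; rfl]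
    exact Step.isoApp (by simp [swapIso, Clauses.toList])
      (Matches.pair (Matches.var 0 (encZ (x 0))) (Matches.var 1 (encZ (x 1)))
        (fun y => by by_cases hy : y = 0
                     · exact Or.inr (if_neg (by omega))
                     · exact Or.inl (if_neg hy)))
  | @comp n a b iha ihb =>
    intro x
    set es : List Val := List.ofFn fun i => encZ (x i) with hes
    set es₁ : List Val := List.ofFn fun i => encZ (RPPx.eval a x i) with hes₁
    set es₂ : List Val := List.ofFn fun i => encZ (RPPx.eval b (RPPx.eval a x) i) with hes₂
    have hlen : es.length = n := List.length_ofFn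
    have hlen₁ : es₁.length = n := List.length_ofFn
    have hlen₂ : es₂.length = n := List.length_ofFn
    have hm0 : Matches (lsub 0 es) (vt 0 n) (tupleV es) := by
      have h := matches_varTuple 0 es
      rwa [hlen] at h
    have step2 : Step (.app (isosOf (RPPx.RPP.comp a b)) (tupleV es).toTerm)
        ((Term.lett (pt' n n) (.app (isosOf a) (vt 0 n).toTerm)
          (.lett (pt' (2 * n) n) (.app (isosOf b) (vt n n).toTerm)
            (vt (2 * n) n).toTerm)).applySub (lsub 0 es)) := by
      refine Step.isoApp ?_ hm0
      simp [isosOf, compIso, Clauses.toList]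
    have e1 : (Term.lett (pt' n n) (.app (isosOf a) (vt 0 n).toTerm)
          (.lett (pt' (2 * n) n) (.app (isosOf b) (vt n n).toTerm)
            (vt (2 * n) n).toTerm)).applySub (lsub 0 es)
        = Term.lett (pt' n n) (.app (isosOf a) (tupleV es).toTerm)
            (.lett (pt' (2 * n) n) (.app (isosOf b) (vt n n).toTerm)
              (vt (2 * n) n).toTerm) := by
      simp only [Term.applySub, toTerm_applySub, applySub_tupleV, vt]
      rw [map_applySub_lsub es n hlen,
        map_applySub_out (lsub 0 es) n n (fun y hy1 hy2 => lsub_ge es (by omega)),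
        map_applySub_out (lsub 0 es) (2*n) n (fun y hy1 hy2 => lsub_ge es (by omega))]
    have hX₁ : Steps (.app (isosOf a) (tupleV es).toTerm) ((tupleV es₁).toTerm) := iha x
    have hm1 : Matches (lsub' n es₁) (pt' n n).toVal (tupleV es₁) := by
      have := matches_patOfVars n es₁
      rwa [hlen₁] at this
    have e2 : (Term.lett (pt' (2 * n) n) (.app (isosOf b) (vt n n).toTerm)
            (vt (2 * n) n).toTerm).applySub (lsub' n es₁)
        = Term.lett (pt' (2 * n) n) (.app (isosOf b) (tupleV es₁).toTerm)
            (vt (2 * n) n).toTerm := by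
      simp only [Term.applySub, toTerm_applySub, applySub_tupleV, vt]
      rw [map_applySub_lsub' n es₁ n hlen₁,
        map_applySub_out (lsub' n es₁) (2*n) n
          (fun y hy1 hy2 => lsub'_out es₁ (by omega) (Or.inr (by omega)))]
    have hX₂ : Steps (.app (isosOf b) (tupleV es₁).toTerm) ((tupleV es₂).toTerm) :=
      ihb (RPPx.eval a x)
    have hm2 : Matches (lsub' (2*n) es₂) (pt' (2*n) n).toVal (tupleV es₂) := by
      have := matches_patOfVars (2*n) es₂
      rwa [hlen₂] at this
    have e3 : ((vt (2 * n) n).toTerm).applySub (lsub' (2*n) es₂) = (tupleV es₂).toTerm := by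
      simp only [vt, toTerm_applySub, applySub_tupleV]
      rw [map_applySub_lsub' (2*n) es₂ n hlen₂]
    rw [show (encTup x).toTerm = (tupleV es).toTerm from rfl,
      show (encTup (RPPx.eval (RPPx.RPP.comp a b) x)).toTerm = (tupleV es₂).toTerm from rfl]
    refine Relation.ReflTransGen.head step2 ?_
    rw [e1]
    refine Relation.ReflTransGen.trans (steps_letstep hX₁ hm1) ?_
    rw [e2]
    refine Relation.ReflTransGen.trans (steps_letstep hX₂ hm2) ?_
    rw [e3]
  | @par j l a b iha ihb =>
    intro x
    set esA : List Val := List.ofFn fun i : Fin j => encZ (x (Fin.castAdd l i)) with hesA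
    set esB : List Val := List.ofFn fun i : Fin l => encZ (x (Fin.natAdd j i)) with hesB
    set esA' : List Val :=
      List.ofFn fun i => encZ (RPPx.eval a (x ∘ Fin.castAdd l) i) with hesA'
    set esB' : List Val :=
      List.ofFn fun i => encZ (RPPx.eval b (x ∘ Fin.natAdd j) i) with hesB'
    have hlA : esA.length = j := List.length_ofFn
    have hlB : esB.length = l := List.length_ofFn
    have hlA' : esA'.length = j := List.length_ofFn
    have hlB' : esB'.length = l := List.length_ofFn
    have hsplit : (List.ofFn fun i => encZ (x i)) = esA ++ esB := List.ofFn_add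
    have hlen : (esA ++ esB).length = j + l := by simp [hlA, hlB]
    have hm0 : Matches (lsub 0 (esA ++ esB)) (vt 0 (j + l)) (tupleV (esA ++ esB)) := by
      have h := matches_varTuple 0 (esA ++ esB)
      rwa [hlen] at h
    have step2 : Step (.app (isosOf (RPPx.RPP.par a b)) (tupleV (esA ++ esB)).toTerm)
        ((Term.lett (patOfVars (List.range' (j + l) j)) (.app (isosOf a) (vt 0 j).toTerm)
          (.lett (patOfVars (List.range' (2 * j + l) l)) (.app (isosOf b) (vt j l).toTerm)
            (tupleV (((List.range' (j + l) j ++ List.range' (2 * j + l) l)).map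
              .var)).toTerm)).applySub (lsub 0 (esA ++ esB))) := by
      refine Step.isoApp ?_ hm0
      simp [isosOf, parIso, Clauses.toList]
    have hA : ((List.range' 0 j).map Val.var).map (Val.applySub (lsub 0 (esA ++ esB)))
        = esA := by
      have h := map_range'_applySub (lsub 0 (esA ++ esB)) 0 esA (fun i hi => by
        rw [lsub_get (s := 0) (esA ++ esB) (show i < (esA ++ esB).length by simp; omega)]
        simp only [Option.getD_some, List.get_eq_getElem]
        exact List.getElem_append_left hi)
      rwa [hlA] at h
    have hB : ((List.range' j l).map Val.var).map (Val.applySub (lsub 0 (esA ++ esB)))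
        = esB := by
      have h := map_range'_applySub (lsub 0 (esA ++ esB)) j esB (fun i hi => by
        rw [lsub_get0 (esA ++ esB) (show j + i < (esA ++ esB).length by simp; omega)]
        simp only [Option.getD_some, List.get_eq_getElem]
        rw [List.getElem_append_right (by omega)]
        simp only [show j + i - esA.length = i from by omega])
      rwa [hlB] at h
    have e1 : (Term.lett (patOfVars (List.range' (j + l) j))
          (.app (isosOf a) (vt 0 j).toTerm)
          (.lett (patOfVars (List.range' (2 * j + l) l)) (.app (isosOf b) (vt j l).toTerm)
            (tupleV (((List.range' (j + l) j ++ List.range' (2 * j + l) l)).map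
              .var)).toTerm)).applySub (lsub 0 (esA ++ esB))
        = Term.lett (patOfVars (List.range' (j + l) j))
            (.app (isosOf a) (tupleV esA).toTerm)
            (.lett (patOfVars (List.range' (2 * j + l) l))
              (.app (isosOf b) (tupleV esB).toTerm)
              (tupleV (((List.range' (j + l) j ++ List.range' (2 * j + l) l)).map
                .var)).toTerm) := by
      simp only [Term.applySub, toTerm_applySub, applySub_tupleV, List.map_append, vt]
      rw [hA, hB,
        map_applySub_out (lsub 0 (esA ++ esB)) (j+l) j
          (fun y hy1 hy2 => lsub_ge (esA ++ esB) (by simp [hlA, hlB]; omega)),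
        map_applySub_out (lsub 0 (esA ++ esB)) (2*j+l) l
          (fun y hy1 hy2 => lsub_ge (esA ++ esB) (by simp [hlA, hlB]; omega))]
    have hXA : Steps (.app (isosOf a) (tupleV esA).toTerm) ((tupleV esA').toTerm) := by
      have h := iha (x ∘ Fin.castAdd l)
      rwa [show encTup (x ∘ Fin.castAdd l) = tupleV esA from by
        rw [hesA]; simp [encTup, Function.comp_def]] at h
    have hm1 : Matches (lsub' (j+l) esA')
        (patOfVars (List.range' (j + l) j)).toVal (tupleV esA') := by
      have := matches_patOfVars (j+l) esA'
      rwa [hlA'] at this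
    have e2 : (Term.lett (patOfVars (List.range' (2 * j + l) l))
          (.app (isosOf b) (tupleV esB).toTerm)
          (tupleV (((List.range' (j + l) j ++ List.range' (2 * j + l) l)).map
            .var)).toTerm).applySub (lsub' (j+l) esA')
        = Term.lett (patOfVars (List.range' (2 * j + l) l))
            (.app (isosOf b) (tupleV esB).toTerm)
            (tupleV (esA' ++ ((List.range' (2 * j + l) l).map .var))).toTerm := by
      simp only [Term.applySub, toTerm_applySub, applySub_tupleV, List.map_append]
      rw [map_applySub_lsub' (j+l) esA' j hlA',
        map_applySub_out (lsub' (j+l) esA') (2*j+l) l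
          (fun y hy1 hy2 => lsub'_out esA' (by omega) (Or.inr (by omega))),
        hesB, applySub_ofFn_encZ]
    have hXB : Steps (.app (isosOf b) (tupleV esB).toTerm) ((tupleV esB').toTerm) := by
      have h := ihb (x ∘ Fin.natAdd j)
      rwa [show encTup (x ∘ Fin.natAdd j) = tupleV esB from by
        rw [hesB]; simp [encTup, Function.comp_def]] at h
    have hm2 : Matches (lsub' (2*j+l) esB')
        (patOfVars (List.range' (2 * j + l) l)).toVal (tupleV esB') := by
      have := matches_patOfVars (2*j+l) esB'
      rwa [hlB'] at this
    have e3 : ((tupleV (esA' ++ ((List.range' (2 * j + l) l).map .var))).toTerm).applySub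
          (lsub' (2*j+l) esB')
        = (tupleV (esA' ++ esB')).toTerm := by
      rw [toTerm_applySub]
      simp only [applySub_tupleV, List.map_append]
      rw [map_applySub_lsub' (2*j+l) esB' l hlB', hesA', applySub_ofFn_encZ]
    have hev : RPPx.eval (RPPx.RPP.par a b) x
        = Fin.append (RPPx.eval a (x ∘ Fin.castAdd l))
            (RPPx.eval b (x ∘ Fin.natAdd j)) := rfl
    have hfin : (List.ofFn fun i => encZ (RPPx.eval (RPPx.RPP.par a b) x i))
        = esA' ++ esB' := by
      rw [List.ofFn_add]
      simp only [hev, show ∀ (h : j ≤ j + l) (i : Fin j), Fin.castLE h i = Fin.castAdd l i from fun _ _ => rfl, Fin.append_left, Fin.append_right, hesA', hesB']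
    rw [show (encTup x).toTerm = (tupleV (esA ++ esB)).toTerm from by
        rw [show encTup x = tupleV (List.ofFn fun i => encZ (x i)) from rfl, hsplit],
      show (encTup (RPPx.eval (RPPx.RPP.par a b) x)).toTerm
          = (tupleV (esA' ++ esB')).toTerm from by
        rw [show encTup (RPPx.eval (RPPx.RPP.par a b) x)
            = tupleV (List.ofFn fun i => encZ (RPPx.eval (RPPx.RPP.par a b) x i)) from rfl,
          hfin]]
    refine Relation.ReflTransGen.head step2 ?_
    rw [e1]
    refine Relation.ReflTransGen.trans (steps_letstep hXA hm1) ?_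
    rw [e2]
    refine Relation.ReflTransGen.trans (steps_letstep hXB hm2) ?_
    rw [e3]
  | @it n a ih =>
    intro x
    set es : List Val := List.ofFn fun i : Fin n => encZ (x i.castSucc) with hes
    have hlen : es.length = n := List.length_ofFn
    have hinit : (List.ofFn fun i => encZ (Fin.init x i)) = es := by
      simp [hes, Fin.init]
    have hsplit : (List.ofFn fun i => encZ (x i)) = es ++ [encZ (x (Fin.last n))] := by
      rw [List.ofFn_succ', List.concat_eq_append]
    have hev : RPPx.eval (RPPx.RPP.it a) x
        = Fin.snoc ((RPPx.eval a)^[(x (Fin.last n)).natAbs] (Fin.init x))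
            (x (Fin.last n)) := rfl
    have hres : (List.ofFn fun i => encZ (RPPx.eval (RPPx.RPP.it a) x i))
        = (List.ofFn fun i : Fin n =>
            encZ ((RPPx.eval a)^[(x (Fin.last n)).natAbs] (Fin.init x) i))
          ++ [encZ (x (Fin.last n))] := by
      rw [List.ofFn_succ', List.concat_eq_append]
      congr 1
      · congr 1
        funext i
        rw [hev, Fin.snoc_castSucc]
      · rw [hev, Fin.snoc_last]
    rcases lt_trichotomy (x (Fin.last n)) 0 with hsgn | hzero | hsgn

    · -- hsgn negative : x (Fin.last n) < 0
      set m : ℕ := (x (Fin.last n)).natAbs - 1 with hm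
      set es' : List Val :=
        List.ofFn fun i => encZ ((RPPx.eval a)^[m+1] (Fin.init x) i) with hes'
      have hlen' : es'.length = n := List.length_ofFn
      have hzenc : encZ (x (Fin.last n)) = Val.inr (.inr (enpos m)) := by
        rw [encZ_neg hsgn]
      have hm0 : Matches (Sub.union (lsub 0 es)
            (fun y => if y = n then some (enpos m) else none))
          (tupleV (((List.range' 0 n).map Val.var) ++ [Val.inr (.inr (.var n))]))
          (tupleV (es ++ [Val.inr (.inr (enpos m))])) := by
        have h := matches_head' 0 es
          (σt := fun y => if y = n then some (enpos m) else none)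
          (Matches.inr (Matches.inr (Matches.var n (enpos m))))
          (fun y _ hy => if_neg (by omega))
        rwa [hlen] at h
      have step2 : Step
          (.app (isosOf (RPPx.RPP.it a))
            (tupleV (es ++ [Val.inr (.inr (enpos m))])).toTerm)
          ((Term.lett (patOfVars (List.range' (n + 1) n ++ [2 * n + 1]))
            (.app (auxIt n (isosOf a))
              (tupleV (((List.range' 0 n).map Val.var) ++ [Val.var n])).toTerm)
            (tupleV (((List.range' (n + 1) n).map Val.var)
                ++ [Val.inr (.inr (.var (2 * n + 1)))])).toTerm).applySub
              (Sub.union (lsub 0 es)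
                (fun y => if y = n then some (enpos m) else none))) := by
        refine Step.isoApp ?_ hm0
        simp [isosOf, itIso, Clauses.toList]
      have hσ₀n : (Sub.union (lsub 0 es)
          (fun y => if y = n then some (enpos m) else none)) n = some (enpos m) := by
        rw [sub_union_apply, lsub_ge es (by omega)]
        simp
      have hσ₀out : ∀ y, n + 1 ≤ y → (Sub.union (lsub 0 es)
          (fun y => if y = n then some (enpos m) else none)) y = none :=
        fun y hy => union_out es _ y (by omega) (if_neg (by omega))
      have e1 : (Term.lett (patOfVars (List.range' (n + 1) n ++ [2 * n + 1]))
            (.app (auxIt n (isosOf a))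
              (tupleV (((List.range' 0 n).map Val.var) ++ [Val.var n])).toTerm)
            (tupleV (((List.range' (n + 1) n).map Val.var)
                ++ [Val.inr (.inr (.var (2 * n + 1)))])).toTerm).applySub
              (Sub.union (lsub 0 es)
                (fun y => if y = n then some (enpos m) else none))
          = Term.lett (patOfVars (List.range' (n + 1) n ++ [2 * n + 1]))
            (.app (auxIt n (isosOf a)) (tupleV (es ++ [enpos m])).toTerm)
            (tupleV (((List.range' (n + 1) n).map Val.var)
                ++ [Val.inr (.inr (.var (2 * n + 1)))])).toTerm := by
        simp only [Term.applySub, toTerm_applySub, applySub_tupleV, List.map_append]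
        rw [map_applySub_lsub_union es _ n hlen,
          map_applySub_out _ (n+1) n (fun y hy1 hy2 => hσ₀out y (by omega))]
        simp [Val.applySub, applySub_var, hσ₀n, hσ₀out (2*n+1) (by omega)]
      have hX : Steps
          (.app (auxIt n (isosOf a)) (tupleV (es ++ [enpos m])).toTerm)
          ((tupleV (es' ++ [enpos m])).toTerm) := by
        have h := aux_correct n (isosOf a) (RPPx.eval a)
          (isosOf_isoSub a 0 (auxIt n (isosOf a))) ih m (Fin.init x)
        rwa [hinit] at h
      have hRange : List.range' (n + 1) n ++ [2 * n + 1] = List.range' (n + 1) (n + 1) := by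
        rw [List.range'_concat]
        congr 1
        simp
        omega
      have hm1 : Matches (lsub' (n+1) (es' ++ [enpos m]))
          (patOfVars (List.range' (n + 1) n ++ [2 * n + 1])).toVal
          (tupleV (es' ++ [enpos m])) := by
        rw [hRange]
        have := matches_patOfVars (n+1) (es' ++ [enpos m])
        rwa [show (es' ++ [enpos m]).length = n + 1 by simp [hlen']] at this
      have e3 : ((tupleV (((List.range' (n + 1) n).map Val.var)
              ++ [Val.inr (.inr (.var (2 * n + 1)))])).toTerm).applySub
            (lsub' (n+1) (es' ++ [enpos m]))
          = (tupleV (es' ++ [Val.inr (.inr (enpos m))])).toTerm := by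
        have hmain : ((List.range' (n+1) n).map Val.var).map
            (Val.applySub (lsub' (n+1) (es' ++ [enpos m]))) = es' := by
          have h := map_range'_applySub (lsub' (n+1) (es' ++ [enpos m])) (n+1) es'
            (fun i hi => by
              rw [lsub'_get (es' ++ [enpos m])
                (show i < (es' ++ [enpos m]).length by simp; omega)]
              simp only [Option.getD_some, List.get_eq_getElem]
              exact List.getElem_append_left hi)
          rwa [hlen'] at h
        have hlast : (lsub' (n+1) (es' ++ [enpos m])) (2*n+1) = some (enpos m) := by
          rw [show 2*n+1 = (n+1)+n from by omega,
            lsub'_get (es' ++ [enpos m])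
              (show n < (es' ++ [enpos m]).length by simp [hlen'])]
          congr 1
          simp [List.get_eq_getElem, List.getElem_append_right, hlen']
        rw [toTerm_applySub]
        simp only [applySub_tupleV, List.map_append]
        rw [hmain]
        simp [Val.applySub, applySub_var, hlast]
      rw [show (encTup x).toTerm
          = (tupleV (es ++ [Val.inr (.inr (enpos m))])).toTerm from by
            rw [show encTup x = tupleV (List.ofFn fun i => encZ (x i)) from rfl, hsplit, hzenc],
        show (encTup (RPPx.eval (RPPx.RPP.it a) x)).toTerm
          = (tupleV (es' ++ [Val.inr (.inr (enpos m))])).toTerm from by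
            rw [show encTup (RPPx.eval (RPPx.RPP.it a) x)
                = tupleV (List.ofFn fun i => encZ (RPPx.eval (RPPx.RPP.it a) x i)) from rfl,
              hres, hzenc, hes', show m + 1 = (x (Fin.last n)).natAbs from by omega]]
      refine Relation.ReflTransGen.head step2 ?_
      rw [e1]
      refine Relation.ReflTransGen.trans (steps_letstep hX hm1) ?_
      rw [e3]
    · -- x (Fin.last n) = 0
      have hm0 : Matches (Sub.union (lsub 0 es) (fun _ => none))
          (tupleV (((List.range' 0 n).map Val.var) ++ [Val.inl .unit]))
          (tupleV (es ++ [Val.inl .unit])) := by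
        have h := matches_head' 0 es (σt := fun _ => none)
          (Matches.inl Matches.unit) (fun y _ _ => rfl)
        rwa [hlen] at h
      have e0 : ((tupleV (((List.range' 0 n).map Val.var)
              ++ [Val.inl .unit])).toTerm).applySub
            (Sub.union (lsub 0 es) (fun _ => none))
          = (tupleV (es ++ [Val.inl .unit])).toTerm := by
        rw [toTerm_applySub]
        simp only [applySub_tupleV, List.map_append]
        rw [map_applySub_lsub_union es _ n hlen]
        simp [Val.applySub]
      rw [show (encTup x).toTerm = (tupleV (es ++ [Val.inl .unit])).toTerm from by
          rw [show encTup x = tupleV (List.ofFn fun i => encZ (x i)) from rfl, hsplit,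
            hzero, encZ_zero],
        show (encTup (RPPx.eval (RPPx.RPP.it a) x)).toTerm
            = (tupleV (es ++ [Val.inl .unit])).toTerm from by
          rw [show encTup (RPPx.eval (RPPx.RPP.it a) x)
              = tupleV (List.ofFn fun i => encZ (RPPx.eval (RPPx.RPP.it a) x i)) from rfl,
            hres, hzero, encZ_zero]
          simp [Function.iterate_zero, hinit]]
      refine Relation.ReflTransGen.single ?_
      have hstep : Step (.app (isosOf (RPPx.RPP.it a)) (tupleV (es ++ [Val.inl .unit])).toTerm)
          (((tupleV (((List.range' 0 n).map Val.var) ++ [Val.inl .unit])).toTerm).applySub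
            (Sub.union (lsub 0 es) (fun _ => none))) := by
        refine Step.isoApp ?_ hm0
        simp [isosOf, itIso, Clauses.toList]
      rw [e0] at hstep
      exact hstep

    · -- hsgn positive : x (Fin.last n) > 0
      set m : ℕ := (x (Fin.last n)).natAbs - 1 with hm
      set es' : List Val :=
        List.ofFn fun i => encZ ((RPPx.eval a)^[m+1] (Fin.init x) i) with hes'
      have hlen' : es'.length = n := List.length_ofFn
      have hzenc : encZ (x (Fin.last n)) = Val.inr (.inl (enpos m)) := by
        rw [encZ_pos hsgn]
      have hm0 : Matches (Sub.union (lsub 0 es)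
            (fun y => if y = n then some (enpos m) else none))
          (tupleV (((List.range' 0 n).map Val.var) ++ [Val.inr (.inl (.var n))]))
          (tupleV (es ++ [Val.inr (.inl (enpos m))])) := by
        have h := matches_head' 0 es
          (σt := fun y => if y = n then some (enpos m) else none)
          (Matches.inr (Matches.inl (Matches.var n (enpos m))))
          (fun y _ hy => if_neg (by omega))
        rwa [hlen] at h
      have step2 : Step
          (.app (isosOf (RPPx.RPP.it a))
            (tupleV (es ++ [Val.inr (.inl (enpos m))])).toTerm)
          ((Term.lett (patOfVars (List.range' (n + 1) n ++ [2 * n + 1]))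
            (.app (auxIt n (isosOf a))
              (tupleV (((List.range' 0 n).map Val.var) ++ [Val.var n])).toTerm)
            (tupleV (((List.range' (n + 1) n).map Val.var)
                ++ [Val.inr (.inl (.var (2 * n + 1)))])).toTerm).applySub
              (Sub.union (lsub 0 es)
                (fun y => if y = n then some (enpos m) else none))) := by
        refine Step.isoApp ?_ hm0
        simp [isosOf, itIso, Clauses.toList]
      have hσ₀n : (Sub.union (lsub 0 es)
          (fun y => if y = n then some (enpos m) else none)) n = some (enpos m) := by
        rw [sub_union_apply, lsub_ge es (by omega)]
        simp
      have hσ₀out : ∀ y, n + 1 ≤ y → (Sub.union (lsub 0 es)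
          (fun y => if y = n then some (enpos m) else none)) y = none :=
        fun y hy => union_out es _ y (by omega) (if_neg (by omega))
      have e1 : (Term.lett (patOfVars (List.range' (n + 1) n ++ [2 * n + 1]))
            (.app (auxIt n (isosOf a))
              (tupleV (((List.range' 0 n).map Val.var) ++ [Val.var n])).toTerm)
            (tupleV (((List.range' (n + 1) n).map Val.var)
                ++ [Val.inr (.inl (.var (2 * n + 1)))])).toTerm).applySub
              (Sub.union (lsub 0 es)
                (fun y => if y = n then some (enpos m) else none))
          = Term.lett (patOfVars (List.range' (n + 1) n ++ [2 * n + 1]))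
            (.app (auxIt n (isosOf a)) (tupleV (es ++ [enpos m])).toTerm)
            (tupleV (((List.range' (n + 1) n).map Val.var)
                ++ [Val.inr (.inl (.var (2 * n + 1)))])).toTerm := by
        simp only [Term.applySub, toTerm_applySub, applySub_tupleV, List.map_append]
        rw [map_applySub_lsub_union es _ n hlen,
          map_applySub_out _ (n+1) n (fun y hy1 hy2 => hσ₀out y (by omega))]
        simp [Val.applySub, applySub_var, hσ₀n, hσ₀out (2*n+1) (by omega)]
      have hX : Steps
          (.app (auxIt n (isosOf a)) (tupleV (es ++ [enpos m])).toTerm)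
          ((tupleV (es' ++ [enpos m])).toTerm) := by
        have h := aux_correct n (isosOf a) (RPPx.eval a)
          (isosOf_isoSub a 0 (auxIt n (isosOf a))) ih m (Fin.init x)
        rwa [hinit] at h
      have hRange : List.range' (n + 1) n ++ [2 * n + 1] = List.range' (n + 1) (n + 1) := by
        rw [List.range'_concat]
        congr 1
        simp
        omega
      have hm1 : Matches (lsub' (n+1) (es' ++ [enpos m]))
          (patOfVars (List.range' (n + 1) n ++ [2 * n + 1])).toVal
          (tupleV (es' ++ [enpos m])) := by
        rw [hRange]
        have := matches_patOfVars (n+1) (es' ++ [enpos m])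
        rwa [show (es' ++ [enpos m]).length = n + 1 by simp [hlen']] at this
      have e3 : ((tupleV (((List.range' (n + 1) n).map Val.var)
              ++ [Val.inr (.inl (.var (2 * n + 1)))])).toTerm).applySub
            (lsub' (n+1) (es' ++ [enpos m]))
          = (tupleV (es' ++ [Val.inr (.inl (enpos m))])).toTerm := by
        have hmain : ((List.range' (n+1) n).map Val.var).map
            (Val.applySub (lsub' (n+1) (es' ++ [enpos m]))) = es' := by
          have h := map_range'_applySub (lsub' (n+1) (es' ++ [enpos m])) (n+1) es'
            (fun i hi => by
              rw [lsub'_get (es' ++ [enpos m])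
                (show i < (es' ++ [enpos m]).length by simp; omega)]
              simp only [Option.getD_some, List.get_eq_getElem]
              exact List.getElem_append_left hi)
          rwa [hlen'] at h
        have hlast : (lsub' (n+1) (es' ++ [enpos m])) (2*n+1) = some (enpos m) := by
          rw [show 2*n+1 = (n+1)+n from by omega,
            lsub'_get (es' ++ [enpos m])
              (show n < (es' ++ [enpos m]).length by simp [hlen'])]
          congr 1
          simp [List.get_eq_getElem, List.getElem_append_right, hlen']
        rw [toTerm_applySub]
        simp only [applySub_tupleV, List.map_append]
        rw [hmain]
        simp [Val.applySub, applySub_var, hlast]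
      rw [show (encTup x).toTerm
          = (tupleV (es ++ [Val.inr (.inl (enpos m))])).toTerm from by
            rw [show encTup x = tupleV (List.ofFn fun i => encZ (x i)) from rfl, hsplit, hzenc],
        show (encTup (RPPx.eval (RPPx.RPP.it a) x)).toTerm
          = (tupleV (es' ++ [Val.inr (.inl (enpos m))])).toTerm from by
            rw [show encTup (RPPx.eval (RPPx.RPP.it a) x)
                = tupleV (List.ofFn fun i => encZ (RPPx.eval (RPPx.RPP.it a) x i)) from rfl,
              hres, hzenc, hes', show m + 1 = (x (Fin.last n)).natAbs from by omega]]
      refine Relation.ReflTransGen.head step2 ?_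
      rw [e1]
      refine Relation.ReflTransGen.trans (steps_letstep hX hm1) ?_
      rw [e3]

  | @ite n a b c iha ihb ihc =>
    intro x
    set es : List Val := List.ofFn fun i : Fin n => encZ (x i.castSucc) with hes
    have hlen : es.length = n := List.length_ofFn
    have hinit : (List.ofFn fun i => encZ (Fin.init x i)) = es := by
      simp [hes, Fin.init]
    have hsplit : (List.ofFn fun i => encZ (x i)) = es ++ [encZ (x (Fin.last n))] := by
      rw [List.ofFn_succ', List.concat_eq_append]
    have hev : RPPx.eval (RPPx.RPP.ite a b c) x
        = Fin.snoc ((if 0 < x (Fin.last n) then RPPx.eval a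
            else if x (Fin.last n) = 0 then RPPx.eval b else RPPx.eval c) (Fin.init x))
            (x (Fin.last n)) := rfl
    have hres : (List.ofFn fun i => encZ (RPPx.eval (RPPx.RPP.ite a b c) x i))
        = (List.ofFn fun i : Fin n =>
            encZ ((if 0 < x (Fin.last n) then RPPx.eval a
              else if x (Fin.last n) = 0 then RPPx.eval b else RPPx.eval c) (Fin.init x) i))
          ++ [encZ (x (Fin.last n))] := by
      rw [List.ofFn_succ', List.concat_eq_append]
      congr 1
      · congr 1
        funext i
        rw [hev, Fin.snoc_castSucc]
      · rw [hev, Fin.snoc_last]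
    rcases lt_trichotomy (x (Fin.last n)) 0 with hsgn | hzero | hsgn
    · set es' : List Val := List.ofFn fun i => encZ (RPPx.eval c (Fin.init x) i) with hes'
      have hlen' : es'.length = n := List.length_ofFn
      set m : ℕ := (x (Fin.last n)).natAbs - 1 with hm
      have hσ₀n : (Sub.union (lsub 0 es)
          (fun y => if y = n then some (enpos m) else none)) n = some (enpos m) := by
        rw [sub_union_apply, lsub_ge es (by omega)]
        simp
      have hzenc : encZ (x (Fin.last n)) = Val.inr (.inr (enpos m)) := by rw [encZ_neg hsgn]
      have hm0 : Matches (Sub.union (lsub 0 es) (fun y => if y = n then some (enpos m) else none))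
          (tupleV (((List.range' 0 n).map Val.var) ++ [Val.inr (.inr (.var n))]))
          (tupleV (es ++ [Val.inr (.inr (enpos m))])) := by
        have h := matches_head' 0 es (σt := (fun y => if y = n then some (enpos m) else none)) (Matches.inr (Matches.inr (Matches.var n (enpos m)))) (fun y _ hy => if_neg (by omega))
        rwa [hlen] at h
      have step2 : Step
          (.app (isosOf (RPPx.RPP.ite a b c)) (tupleV (es ++ [Val.inr (.inr (enpos m))])).toTerm)
          ((Term.lett (pt' (n + 1) n) (.app (isosOf c) (vt 0 n).toTerm)
            (tupleV (((List.range' (n + 1) n).map Val.var)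
                ++ [Val.inr (.inr (.var n))])).toTerm).applySub
              (Sub.union (lsub 0 es) (fun y => if y = n then some (enpos m) else none))) := by
        refine Step.isoApp ?_ hm0
        simp [isosOf, ifIso, Clauses.toList]
      have hσ₀out : ∀ y, n + 1 ≤ y → (Sub.union (lsub 0 es) (fun y => if y = n then some (enpos m) else none)) y = none :=
        fun y hy => union_out es _ y (by omega) (if_neg (by omega))
      have e1 : (Term.lett (pt' (n + 1) n) (.app (isosOf c) (vt 0 n).toTerm)
            (tupleV (((List.range' (n + 1) n).map Val.var)
                ++ [Val.inr (.inr (.var n))])).toTerm).applySub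
              (Sub.union (lsub 0 es) (fun y => if y = n then some (enpos m) else none))
          = Term.lett (pt' (n + 1) n) (.app (isosOf c) (tupleV es).toTerm)
            (tupleV (((List.range' (n + 1) n).map Val.var)
                ++ [Val.inr (.inr (enpos m))])).toTerm := by
        simp only [Term.applySub, toTerm_applySub, applySub_tupleV, List.map_append, vt]
        rw [map_applySub_lsub_union es _ n hlen,
          map_applySub_out _ (n+1) n (fun y hy1 hy2 => hσ₀out y (by omega))]
        simp [Val.applySub, applySub_var, hσ₀n]
      have hX : Steps (.app (isosOf c) (tupleV es).toTerm) ((tupleV es').toTerm) := by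
        have h := ihc (Fin.init x)
        rwa [show encTup (Fin.init x)
            = tupleV (List.ofFn fun i => encZ (Fin.init x i)) from rfl, hinit] at h
      have hm1 : Matches (lsub' (n+1) es') (pt' (n + 1) n).toVal (tupleV es') := by
        have := matches_patOfVars (n+1) es'
        rwa [hlen'] at this
      have e3 : ((tupleV (((List.range' (n + 1) n).map Val.var)
              ++ [Val.inr (.inr (enpos m))])).toTerm).applySub (lsub' (n+1) es')
          = (tupleV (es' ++ [Val.inr (.inr (enpos m))])).toTerm := by
        rw [toTerm_applySub]
        simp only [applySub_tupleV, List.map_append]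
        rw [map_applySub_lsub' (n+1) es' n hlen']
        simp [Val.applySub]
      rw [show (encTup x).toTerm = (tupleV (es ++ [Val.inr (.inr (enpos m))])).toTerm from by
          rw [show encTup x = tupleV (List.ofFn fun i => encZ (x i)) from rfl, hsplit, hzenc],
        show (encTup (RPPx.eval (RPPx.RPP.ite a b c) x)).toTerm
            = (tupleV (es' ++ [Val.inr (.inr (enpos m))])).toTerm from by
          rw [show encTup (RPPx.eval (RPPx.RPP.ite a b c) x)
              = tupleV (List.ofFn fun i => encZ (RPPx.eval (RPPx.RPP.ite a b c) x i)) from rfl,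
            hres, hzenc]
          simp only [if_neg (by omega : ¬ (0:ℤ) < x (Fin.last n)), if_neg (by omega : ¬ x (Fin.last n) = 0), hes']]
      refine Relation.ReflTransGen.head step2 ?_
      rw [e1]
      refine Relation.ReflTransGen.trans (steps_letstep hX hm1) ?_
      rw [e3]
    · set es' : List Val := List.ofFn fun i => encZ (RPPx.eval b (Fin.init x) i) with hes'
      have hlen' : es'.length = n := List.length_ofFn
      have hzenc : encZ (x (Fin.last n)) = Val.inl .unit := by rw [hzero, encZ_zero]
      have hm0 : Matches (Sub.union (lsub 0 es) (fun _ => none))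
          (tupleV (((List.range' 0 n).map Val.var) ++ [Val.inl .unit]))
          (tupleV (es ++ [Val.inl .unit])) := by
        have h := matches_head' 0 es (σt := (fun _ => none)) (Matches.inl Matches.unit) (fun y _ _ => rfl)
        rwa [hlen] at h
      have step2 : Step
          (.app (isosOf (RPPx.RPP.ite a b c)) (tupleV (es ++ [Val.inl .unit])).toTerm)
          ((Term.lett (pt' (n + 1) n) (.app (isosOf b) (vt 0 n).toTerm)
            (tupleV (((List.range' (n + 1) n).map Val.var)
                ++ [Val.inl .unit])).toTerm).applySub
              (Sub.union (lsub 0 es) (fun _ => none))) := by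
        refine Step.isoApp ?_ hm0
        simp [isosOf, ifIso, Clauses.toList]
      have hσ₀out : ∀ y, n + 1 ≤ y → (Sub.union (lsub 0 es) (fun _ => none)) y = none :=
        fun y hy => union_out es _ y (by omega) rfl
      have e1 : (Term.lett (pt' (n + 1) n) (.app (isosOf b) (vt 0 n).toTerm)
            (tupleV (((List.range' (n + 1) n).map Val.var)
                ++ [Val.inl .unit])).toTerm).applySub
              (Sub.union (lsub 0 es) (fun _ => none))
          = Term.lett (pt' (n + 1) n) (.app (isosOf b) (tupleV es).toTerm)
            (tupleV (((List.range' (n + 1) n).map Val.var)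
                ++ [Val.inl .unit])).toTerm := by
        simp only [Term.applySub, toTerm_applySub, applySub_tupleV, List.map_append, vt]
        rw [map_applySub_lsub_union es _ n hlen,
          map_applySub_out _ (n+1) n (fun y hy1 hy2 => hσ₀out y (by omega))]
        simp [Val.applySub]
      have hX : Steps (.app (isosOf b) (tupleV es).toTerm) ((tupleV es').toTerm) := by
        have h := ihb (Fin.init x)
        rwa [show encTup (Fin.init x)
            = tupleV (List.ofFn fun i => encZ (Fin.init x i)) from rfl, hinit] at h
      have hm1 : Matches (lsub' (n+1) es') (pt' (n + 1) n).toVal (tupleV es') := by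
        have := matches_patOfVars (n+1) es'
        rwa [hlen'] at this
      have e3 : ((tupleV (((List.range' (n + 1) n).map Val.var)
              ++ [Val.inl .unit])).toTerm).applySub (lsub' (n+1) es')
          = (tupleV (es' ++ [Val.inl .unit])).toTerm := by
        rw [toTerm_applySub]
        simp only [applySub_tupleV, List.map_append]
        rw [map_applySub_lsub' (n+1) es' n hlen']
        simp [Val.applySub]
      rw [show (encTup x).toTerm = (tupleV (es ++ [Val.inl .unit])).toTerm from by
          rw [show encTup x = tupleV (List.ofFn fun i => encZ (x i)) from rfl, hsplit, hzenc],
        show (encTup (RPPx.eval (RPPx.RPP.ite a b c) x)).toTerm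
            = (tupleV (es' ++ [Val.inl .unit])).toTerm from by
          rw [show encTup (RPPx.eval (RPPx.RPP.ite a b c) x)
              = tupleV (List.ofFn fun i => encZ (RPPx.eval (RPPx.RPP.ite a b c) x i)) from rfl,
            hres, hzenc]
          simp only [hzero, lt_irrefl, if_false, if_true, if_pos, hes']]
      refine Relation.ReflTransGen.head step2 ?_
      rw [e1]
      refine Relation.ReflTransGen.trans (steps_letstep hX hm1) ?_
      rw [e3]
    · set es' : List Val := List.ofFn fun i => encZ (RPPx.eval a (Fin.init x) i) with hes'
      have hlen' : es'.length = n := List.length_ofFn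
      set m : ℕ := (x (Fin.last n)).natAbs - 1 with hm
      have hσ₀n : (Sub.union (lsub 0 es)
          (fun y => if y = n then some (enpos m) else none)) n = some (enpos m) := by
        rw [sub_union_apply, lsub_ge es (by omega)]
        simp
      have hzenc : encZ (x (Fin.last n)) = Val.inr (.inl (enpos m)) := by rw [encZ_pos hsgn]
      have hm0 : Matches (Sub.union (lsub 0 es) (fun y => if y = n then some (enpos m) else none))
          (tupleV (((List.range' 0 n).map Val.var) ++ [Val.inr (.inl (.var n))]))
          (tupleV (es ++ [Val.inr (.inl (enpos m))])) := by
        have h := matches_head' 0 es (σt := (fun y => if y = n then some (enpos m) else none)) (Matches.inr (Matches.inl (Matches.var n (enpos m)))) (fun y _ hy => if_neg (by omega))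
        rwa [hlen] at h
      have step2 : Step
          (.app (isosOf (RPPx.RPP.ite a b c)) (tupleV (es ++ [Val.inr (.inl (enpos m))])).toTerm)
          ((Term.lett (pt' (n + 1) n) (.app (isosOf a) (vt 0 n).toTerm)
            (tupleV (((List.range' (n + 1) n).map Val.var)
                ++ [Val.inr (.inl (.var n))])).toTerm).applySub
              (Sub.union (lsub 0 es) (fun y => if y = n then some (enpos m) else none))) := by
        refine Step.isoApp ?_ hm0
        simp [isosOf, ifIso, Clauses.toList]
      have hσ₀out : ∀ y, n + 1 ≤ y → (Sub.union (lsub 0 es) (fun y => if y = n then some (enpos m) else none)) y = none :=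
        fun y hy => union_out es _ y (by omega) (if_neg (by omega))
      have e1 : (Term.lett (pt' (n + 1) n) (.app (isosOf a) (vt 0 n).toTerm)
            (tupleV (((List.range' (n + 1) n).map Val.var)
                ++ [Val.inr (.inl (.var n))])).toTerm).applySub
              (Sub.union (lsub 0 es) (fun y => if y = n then some (enpos m) else none))
          = Term.lett (pt' (n + 1) n) (.app (isosOf a) (tupleV es).toTerm)
            (tupleV (((List.range' (n + 1) n).map Val.var)
                ++ [Val.inr (.inl (enpos m))])).toTerm := by
        simp only [Term.applySub, toTerm_applySub, applySub_tupleV, List.map_append, vt]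
        rw [map_applySub_lsub_union es _ n hlen,
          map_applySub_out _ (n+1) n (fun y hy1 hy2 => hσ₀out y (by omega))]
        simp [Val.applySub, applySub_var, hσ₀n]
      have hX : Steps (.app (isosOf a) (tupleV es).toTerm) ((tupleV es').toTerm) := by
        have h := iha (Fin.init x)
        rwa [show encTup (Fin.init x)
            = tupleV (List.ofFn fun i => encZ (Fin.init x i)) from rfl, hinit] at h
      have hm1 : Matches (lsub' (n+1) es') (pt' (n + 1) n).toVal (tupleV es') := by
        have := matches_patOfVars (n+1) es'
        rwa [hlen'] at this
      have e3 : ((tupleV (((List.range' (n + 1) n).map Val.var)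
              ++ [Val.inr (.inl (enpos m))])).toTerm).applySub (lsub' (n+1) es')
          = (tupleV (es' ++ [Val.inr (.inl (enpos m))])).toTerm := by
        rw [toTerm_applySub]
        simp only [applySub_tupleV, List.map_append]
        rw [map_applySub_lsub' (n+1) es' n hlen']
        simp [Val.applySub]
      rw [show (encTup x).toTerm = (tupleV (es ++ [Val.inr (.inl (enpos m))])).toTerm from by
          rw [show encTup x = tupleV (List.ofFn fun i => encZ (x i)) from rfl, hsplit, hzenc],
        show (encTup (RPPx.eval (RPPx.RPP.ite a b c) x)).toTerm
            = (tupleV (es' ++ [Val.inr (.inl (enpos m))])).toTerm from by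
          rw [show encTup (RPPx.eval (RPPx.RPP.ite a b c) x)
              = tupleV (List.ofFn fun i => encZ (RPPx.eval (RPPx.RPP.ite a b c) x i)) from rfl,
            hres, hzenc]
          simp only [if_pos hsgn, hes']]
      refine Relation.ReflTransGen.head step2 ?_
      rw [e1]
      refine Relation.ReflTransGen.trans (steps_letstep hX hm1) ?_
      rw [e3]


end LinRev

open LinRev in
/-- The auxiliary iteration iso is correct: for `f ∈ RPP^k`,
`ω_aux (x̄⃗, n̲) →* (z̄⃗, n̲)` where `z⃗ = f^n(x⃗)` and `n̲ = enpos m` encodes the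
strictly positive natural `n = m+1`. -/
theorem aux_iteration_correct (k : ℕ) (f : RPPx.RPP k) (x : Fin k → ℤ) (m : ℕ) :
    Steps
      (.app (auxIt k (isosOf f))
        (tupleV ((List.ofFn fun i => encZ (x i)) ++ [enpos m])).toTerm)
      ((tupleV ((List.ofFn fun i => encZ (((RPPx.eval f)^[m + 1] x) i))
          ++ [enpos m])).toTerm) := by
  exact aux_correct k (isosOf f) (RPPx.eval f)
    (isosOf_isoSub f 0 (auxIt k (isosOf f))) (isos_correct f) m x
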